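/- arXiv:math-ph/9907014 — 9 statements merged into one kernel-verified Lean document; each statement's English description precedes it below -/
import Mathlib

section
/- For natural numbers A ≥ 1, N ≥ 1 and M, the number of strings a = ⟨a_1, …, a_N⟩ with entries a_i ∈ {0, …, A−1} and entry sum a_1 + ⋯ + a_N = M equals ∑_{n=0}^{⌊M/A⌋} (−1)^n · C(N, n) · C(N − 1 + M − nA, N − 1), where C denotes the binomial coefficient. -/
/-- The cyclic shift operator: `(shift a) i = a (i - 1 mod N)`. -/
def shift {A N : ℕ} (a : Fin N → Fin A) : Fin N → Fin A :=
  fun i => a ⟨((i : ℕ) + (N - 1)) % N, Nat.mod_lt _ i.pos⟩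

/-- The orbit of a string under iterated cyclic shifts. -/
def orbit {A N : ℕ} (a : Fin N → Fin A) : Set (Fin N → Fin A) :=
  {b | ∃ k : ℕ, shift^[k] a = b}

/-- The order of the cycle generated by `a`: the size of its shift orbit. -/
noncomputable def orbitSize {A N : ℕ} (a : Fin N → Fin A) : ℕ :=
  (orbit a).ncard

/-- The sum of the entries of a string. -/
def strSum {A N : ℕ} (a : Fin N → Fin A) : ℕ := ∑ i, (a i : ℕ)

/-- `|S(A,N,M)|`: the number of strings of length `N` over `{0,…,A-1}` with sum `M`. -/
noncomputable def Scard (A N M : ℕ) : ℕ :=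
  Set.ncard {a : Fin N → Fin A | strSum a = M}

/-- `M(A,N,M,n)`: the number of strings of length `N` over `{0,…,A-1}` with sum `M`
whose orbit has size exactly `n`. -/
noncomputable def Mcount (A N M n : ℕ) : ℕ :=
  Set.ncard {a : Fin N → Fin A | strSum a = M ∧ orbitSize a = n}

/-- `N(A,N,M,n)`: the number of cycles (shift orbits) of size exactly `n` among strings
of length `N` over `{0,…,A-1}` with sum `M`. -/
noncomputable def Ncount (A N M n : ℕ) : ℕ :=
  Set.ncard {o : Set (Fin N → Fin A) | ∃ a, strSum a = M ∧ orbitSize a = n ∧ o = orbit a}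

open Finset

noncomputable instance strFintype (N M : ℕ) : Fintype {P : Fin N → ℕ // ∑ i, P i = M} :=
  Fintype.ofEquiv _ (Sym.equivNatSumOfFintype (Fin N) M)

lemma card_str (N M : ℕ) :
    Fintype.card {P : Fin N → ℕ // ∑ i, P i = M} = (N + M - 1).choose M := by
  rw [← Fintype.card_congr (Sym.equivNatSumOfFintype (Fin N) M),
    Sym.card_sym_eq_choose, Fintype.card_fin]

lemma csum {N : ℕ} (A : ℕ) (t : Finset (Fin N)) :
    ∑ i, (if i ∈ t then A else 0) = #t * A := by
  rw [Finset.sum_ite_mem, Finset.univ_inter, Finset.sum_const, smul_eq_mul]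

lemma card_ge_subtype (A N M : ℕ) (t : Finset (Fin N)) (h : #t * A ≤ M) :
    Fintype.card {P : {P : Fin N → ℕ // ∑ i, P i = M} // ∀ i ∈ t, A ≤ P.1 i}
      = (N + (M - #t * A) - 1).choose (M - #t * A) := by
  classical
  rw [← card_str N (M - #t * A)]
  refine Fintype.card_congr ⟨fun P => ⟨fun i => P.1.1 i - if i ∈ t then A else 0, ?_⟩,
    fun Q => ⟨⟨fun i => Q.1 i + if i ∈ t then A else 0, ?_⟩, ?_⟩, ?_, ?_⟩
  · have hc : ∀ i, (if i ∈ t then A else 0) ≤ P.1.1 i := by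
      intro i; split
      · exact P.2 i ‹_›
      · exact Nat.zero_le _
    have : ∑ i, ((P.1.1 i - if i ∈ t then A else 0) + if i ∈ t then A else 0) = M := by
      simp only [fun i => Nat.sub_add_cancel (hc i)]; exact P.1.2
    rw [Finset.sum_add_distrib, csum] at this
    show ∑ i, (P.1.1 i - if i ∈ t then A else 0) = M - #t * A
    omega
  · show ∑ i, (Q.1 i + if i ∈ t then A else 0) = M
    rw [Finset.sum_add_distrib, csum, Q.2]; omega
  · intro i hi; simp [hi]
  · rintro ⟨⟨P, hP⟩, h2⟩
    ext i
    simp only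
    by_cases hi : i ∈ t
    · simp [hi, Nat.sub_add_cancel (h2 i hi)]
    · simp [hi]
  · rintro ⟨Q, hQ⟩
    ext i
    simp only
    by_cases hi : i ∈ t <;> simp [hi]

lemma card_ge_empty (A N M : ℕ) (t : Finset (Fin N)) (h : ¬ #t * A ≤ M) :
    (univ.filter (fun P : {P : Fin N → ℕ // ∑ i, P i = M} => ∀ i ∈ t, A ≤ P.1 i)) = ∅ := by
  classical
  rw [Finset.filter_eq_empty_iff]
  intro P _ hall
  have h1 : #t * A ≤ ∑ i ∈ t, P.1 i := by
    calc #t * A = ∑ _i ∈ t, A := by rw [Finset.sum_const, smul_eq_mul]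
    _ ≤ ∑ i ∈ t, P.1 i := Finset.sum_le_sum hall
  have h2 : ∑ i ∈ t, P.1 i ≤ ∑ i, P.1 i :=
    Finset.sum_le_sum_of_subset (Finset.subset_univ t)
  rw [P.2] at h2
  omega

lemma mem_finset_inf {α β : Type*} [DecidableEq α] [DecidableEq β] [Fintype β]
    {t : Finset α} {S : α → Finset β} {x : β} :
    x ∈ t.inf S ↔ ∀ i ∈ t, x ∈ S i := by
  induction t using Finset.induction with
  | empty => simp
  | insert _ _ _ ih => simp [Finset.inf_insert, ih, Finset.mem_inter]

/-- de Moivre's formula: the number of strings of length `N ≥ 1` over `{0,…,A-1}` (`A ≥ 1`)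
with entry sum `M` equals `∑_{n=0}^{⌊M/A⌋} (-1)^n C(N,n) C(N-1+M-nA, N-1)`. -/
theorem stmt_0 (A N M : ℕ) (hA : 1 ≤ A) (hN : 1 ≤ N) :
    (Scard A N M : ℤ) =
      ∑ n ∈ Finset.range (M / A + 1),
        (-1 : ℤ) ^ n * (N.choose n : ℤ) * ((N - 1 + M - n * A).choose (N - 1) : ℤ) := by
  classical
  set g : ℕ → ℤ := fun n =>
    if n * A ≤ M then ((N + (M - n * A) - 1).choose (M - n * A) : ℤ) else 0 with hg
  set S : Fin N → Finset {P : Fin N → ℕ // ∑ i, P i = M} :=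
    fun i => univ.filter (fun P => A ≤ P.1 i) with hS
  -- Step A : Scard equals the cardinality of the intersection of complements
  have e1 : {a : Fin N → Fin A // strSum a = M} ≃
      {P : {P : Fin N → ℕ // ∑ i, P i = M} // ∀ i, P.1 i < A} :=
    ⟨fun a => ⟨⟨fun i => (a.1 i : ℕ), a.2⟩, fun i => (a.1 i).2⟩,
     fun P => ⟨fun i => ⟨P.1.1 i, P.2 i⟩, P.1.2⟩,
     fun a => rfl, fun P => rfl⟩
  have hA1 : Scard A N M = #(Finset.univ.inf fun i => (S i)ᶜ) := by
    have h1 : Scard A N M =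
        Fintype.card {P : {P : Fin N → ℕ // ∑ i, P i = M} // ∀ i, P.1 i < A} := by
      rw [Scard, ← Nat.card_coe_set_eq, ← Nat.card_eq_fintype_card]
      exact Nat.card_congr e1
    rw [h1, Fintype.card_subtype]
    congr 1
    ext P
    simp only [Finset.mem_filter, Finset.mem_univ, true_and, mem_finset_inf,
      Finset.mem_compl, hS, not_le]
    constructor
    · intro h i _; exact h i
    · intro h i; exact h i trivial
  -- Step B : inclusion-exclusion
  have h2 := Finset.inclusion_exclusion_card_inf_compl (univ : Finset (Fin N)) S
  -- Step C : card of each intersection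
  have h3 : ∀ t : Finset (Fin N), (#(t.inf S) : ℤ) = g #t := by
    intro t
    have ht : t.inf S = univ.filter (fun P => ∀ i ∈ t, A ≤ P.1 i) := by
      ext P; simp [mem_finset_inf, hS]
    rw [ht]
    show _ = if #t * A ≤ M then ((N + (M - #t * A) - 1).choose (M - #t * A) : ℤ) else 0
    by_cases h : #t * A ≤ M
    · rw [if_pos h, ← card_ge_subtype A N M t h, Fintype.card_subtype]
    · rw [if_neg h, card_ge_empty A N M t h]; simp
  have h4 : (Scard A N M : ℤ) = ∑ t ∈ (univ : Finset (Fin N)).powerset, (-1 : ℤ) ^ #t * g #t := by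
    rw [hA1, h2]
    exact Finset.sum_congr rfl fun t _ => by rw [h3 t]
  rw [Finset.sum_powerset] at h4
  have h5 : ∀ j, ∑ t ∈ powersetCard j (univ : Finset (Fin N)), ((-1 : ℤ) ^ #t * g #t)
      = (N.choose j : ℤ) * ((-1 : ℤ) ^ j * g j) := by
    intro j
    have := Finset.sum_powersetCard j (univ : Finset (Fin N)) (fun n => (-1 : ℤ) ^ n * g n)
    simpa [card_univ, mul_comm] using this
  rw [card_univ, Fintype.card_fin] at h4
  simp only [h5] at h4
  -- Step D : reindex
  set F : ℕ → ℤ := fun n => (N.choose n : ℤ) * ((-1 : ℤ) ^ n * g n) with hF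
  have hzero1 : ∀ j ∈ Finset.range (N + 1 + (M / A + 1)), j ∉ Finset.range (N + 1) → F j = 0 := by
    intro j _ hj
    rw [Finset.mem_range, not_lt] at hj
    have hc : N.choose j = 0 := Nat.choose_eq_zero_of_lt (by omega)
    simp [hF, hc]
  have hzero2 : ∀ j ∈ Finset.range (N + 1 + (M / A + 1)), j ∉ Finset.range (M / A + 1) →
      F j = 0 := by
    intro j _ hj
    rw [Finset.mem_range, not_lt] at hj
    have hnot : ¬ j * A ≤ M := by
      intro hle
      have hjj : j ≤ M / A := (Nat.le_div_iff_mul_le (show 0 < A by omega)).mpr hle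
      omega
    simp [hF, hg, hnot]
  have hfin : ∑ j ∈ Finset.range (N + 1), F j = ∑ j ∈ Finset.range (M / A + 1), F j := by
    have ha : ∑ j ∈ Finset.range (N + 1), F j = ∑ j ∈ Finset.range (N + 1 + (M / A + 1)), F j :=
      Finset.sum_subset (Finset.range_subset_range.2 (Nat.le_add_right _ _)) hzero1
    have hb : ∑ j ∈ Finset.range (M / A + 1), F j
        = ∑ j ∈ Finset.range (N + 1 + (M / A + 1)), F j :=
      Finset.sum_subset (Finset.range_subset_range.2 (Nat.le_add_left _ _)) hzero2
    rw [ha, hb]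
  rw [h4, hfin]
  refine Finset.sum_congr rfl fun n hn => ?_
  rw [Finset.mem_range] at hn
  have hn' : n ≤ M / A := by omega
  have hnA : n * A ≤ M := (Nat.le_div_iff_mul_le (show 0 < A by omega)).mp hn'
  have hch : (N + (M - n * A) - 1).choose (M - n * A) = (N - 1 + M - n * A).choose (N - 1) := by
    have e2 : N + (M - n * A) - 1 = (N - 1) + (M - n * A) := by omega
    have e3 : N - 1 + M - n * A = (N - 1) + (M - n * A) := by omega
    rw [e2, e3]
    have := Nat.choose_symm (Nat.le_add_left (M - n * A) (N - 1))
    simpa using this.symm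
  simp only [hF, hg, if_pos hnA, hch]
  ring
end

section
/- Let a be a string of length N ≥ 1 over the alphabet {0, …, A−1} with entry sum Σ(a) = M, and let n be the size of the orbit of a under the cyclic shift operator T. Then N divides M·n; equivalently, m := M·n/N is a natural number. -/
lemma shift_iter {A N : ℕ} (a : Fin N → Fin A) (k : ℕ) (i : Fin N) (hN : 0 < N) :
    shift^[k] a i = a ⟨((i : ℕ) + k * (N - 1)) % N, Nat.mod_lt _ hN⟩ := by
  induction k generalizing i with
  | zero => simp [Nat.mod_eq_of_lt i.isLt]
  | succ k ih =>
    rw [Function.iterate_succ_apply', shift]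
    rw [ih]
    congr 1
    apply Fin.ext
    simp only [Nat.mod_add_mod]
    congr 1
    ring

lemma shift_iter_N {A N : ℕ} (a : Fin N → Fin A) (hN : 0 < N) :
    shift^[N] a = a := by
  funext i
  rw [shift_iter a N i hN]
  congr 1
  apply Fin.ext
  simp only []
  have : (i : ℕ) + N * (N - 1) = (i : ℕ) + (N - 1) * N := by ring
  rw [this, Nat.add_mul_mod_self_right, Nat.mod_eq_of_lt i.isLt]

/-- If a string `a` of length `N ≥ 1` has entry sum `M` and orbit size `n`,
then `N` divides `M·n` (so `m := M·n/N` is a natural number). -/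
theorem stmt_3 (A N M n : ℕ) (hN : 1 ≤ N) (a : Fin N → Fin A)
    (hM : strSum a = M) (hn : orbitSize a = n) :
    N ∣ M * n := by
  classical
  have hN0 : 0 < N := hN
  have hNP : ∃ k, 0 < k ∧ shift^[k] a = a := ⟨N, hN0, shift_iter_N a hN0⟩
  obtain ⟨m, ⟨hm0, hma⟩, hmin'⟩ :
      ∃ m, (0 < m ∧ shift^[m] a = a) ∧ ∀ k < m, ¬(0 < k ∧ shift^[k] a = a) :=
    ⟨Nat.find hNP, Nat.find_spec hNP, fun k hk => Nat.find_min hNP hk⟩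
  have hmin : ∀ k, 0 < k → k < m → shift^[k] a ≠ a := fun k hk0 hkm hk =>
    hmin' k hkm ⟨hk0, hk⟩
  have hmul : ∀ q, shift^[q * m] a = a := by
    intro q
    induction q with
    | zero => simp
    | succ q ih => rw [Nat.succ_mul, Function.iterate_add_apply, hma, ih]
  -- m divides N
  have hmN : m ∣ N := by
    have h2 : N % m + N / m * m = N := Nat.mod_add_div' N m
    have h1 : shift^[N % m] a = a := by
      conv_lhs => rw [← hmul (N / m)]
      rw [← Function.iterate_add_apply, h2, shift_iter_N a hN0]
    by_contra h
    have hr0 : 0 < N % m := Nat.pos_of_ne_zero fun h0 => h (Nat.dvd_of_mod_eq_zero h0)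
    exact hmin _ hr0 (Nat.mod_lt _ hm0) h1
  have hmod : ∀ k, shift^[k] a = shift^[k % m] a := by
    intro k
    conv_lhs => rw [← Nat.mod_add_div' k m]
    rw [Function.iterate_add_apply, hmul]
  have horb : orbit a = Set.range (fun k : Fin m => shift^[(k : ℕ)] a) := by
    ext b
    constructor
    · rintro ⟨k, rfl⟩
      exact ⟨⟨k % m, Nat.mod_lt _ hm0⟩, (hmod k).symm⟩
    · rintro ⟨k, rfl⟩
      exact ⟨k, rfl⟩
  have hinj : Function.Injective (fun k : Fin m => shift^[(k : ℕ)] a) := by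
    have key : ∀ i j : Fin m, (i : ℕ) < (j : ℕ) → shift^[(i : ℕ)] a ≠ shift^[(j : ℕ)] a := by
      intro i j hij he
      have hjm := j.isLt
      apply hmin ((m - j) + i) (by omega) (by omega)
      calc shift^[(m - j) + i] a = shift^[m - j] (shift^[(i:ℕ)] a) := by
            rw [Function.iterate_add_apply]
        _ = shift^[m - j] (shift^[(j:ℕ)] a) := by rw [he]
        _ = shift^[(m - j) + j] a := by rw [Function.iterate_add_apply]
        _ = a := by rw [Nat.sub_add_cancel (le_of_lt j.isLt), hma]
    intro i j he
    rcases lt_trichotomy (i : ℕ) (j : ℕ) with h | h | h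
    · exact absurd he (key i j h)
    · exact Fin.ext h
    · exact absurd he.symm (key j i h)
  have hsize : orbitSize a = m := by
    rw [orbitSize, horb, ← Set.image_univ, Set.ncard_image_of_injective _ hinj,
      Set.ncard_univ, Nat.card_eq_fintype_card, Fintype.card_fin]
  -- periodic sum
  set g : ℕ → ℕ := fun j => (a ⟨j % N, Nat.mod_lt _ hN0⟩ : ℕ) with hg
  have hm1 : m + m * (N - 1) = m * N := by
    cases N with
    | zero => omega
    | succ N => rw [Nat.succ_sub_one, Nat.mul_succ]; omega
  have hper : ∀ j, g (j + m) = g j := by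
    intro j
    have h4 := congrFun hma ⟨(j + m) % N, Nat.mod_lt _ hN0⟩
    rw [shift_iter _ _ _ hN0] at h4
    have hidx : ((j + m) % N + m * (N - 1)) % N = j % N := by
      rw [Nat.mod_add_mod, show j + m + m * (N - 1) = j + m * N from by omega,
        Nat.add_mul_mod_self_right]
    calc g (j + m) = ((a ⟨(j + m) % N, Nat.mod_lt _ hN0⟩ : Fin A) : ℕ) := rfl
      _ = ((a ⟨((j + m) % N + m * (N - 1)) % N, Nat.mod_lt _ hN0⟩ : Fin A) : ℕ) := by
          rw [h4]
      _ = ((a ⟨j % N, Nat.mod_lt _ hN0⟩ : Fin A) : ℕ) := by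
          congr 1
          exact congrArg a (Fin.ext hidx)
      _ = g j := rfl
  have hperq : ∀ q j, g (j + q * m) = g j := by
    intro q
    induction q with
    | zero => simp
    | succ q ih =>
      intro j
      rw [Nat.succ_mul, ← Nat.add_assoc, hper, ih]
  have hsum : ∀ q, ∑ j ∈ Finset.range (q * m), g j = q * ∑ j ∈ Finset.range m, g j := by
    intro q
    induction q with
    | zero => simp
    | succ q ih =>
      rw [Nat.succ_mul, Finset.sum_range_add, ih, Nat.succ_mul]
      congr 1
      apply Finset.sum_congr rfl
      intro j _
      rw [Nat.add_comm, hperq]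
  have hstr : strSum a = ∑ j ∈ Finset.range N, g j := by
    rw [strSum, ← Fin.sum_univ_eq_sum_range]
    apply Finset.sum_congr rfl
    intro i _
    simp [hg, Nat.mod_eq_of_lt i.isLt]
  obtain ⟨q, hq⟩ := hmN
  have hqm : N = q * m := by rw [hq, Nat.mul_comm]
  have hMs : M = q * ∑ j ∈ Finset.range m, g j := by
    rw [← hM, hstr, hqm, hsum]
  refine ⟨∑ j ∈ Finset.range m, g j, ?_⟩
  rw [hMs, ← hn, hsize, hqm]
  ring
end

section
/- Let A ≥ 1, N ≥ 1, M be natural numbers and let n ∈ D(A,N,M), i.e. n | N and N | M·n. Then N(A, N, M, n) = N(A, n, M·n/N, n): the number of cycles of order n among strings of length N with sum M equals the number of cycles of order n among strings of length n with sum M·n/N. Equivalently, the number of strings of length N with sum M whose cyclic-shift orbit has size exactly n equals the number of strings of length n with sum M·n/N whose cyclic-shift orbit has size exactly n. If n ∤ N or N ∤ M·n, then there are no strings of length N with sum M and orbit size n. -/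
section Aux

variable {A N n : ℕ}

lemma shift_apply [NeZero N] (a : Fin N → Fin A) (i : Fin N) : shift a i = a (i - 1) := by
  unfold shift
  congr 1
  rw [Fin.sub_def]
  apply Fin.ext
  show ((i : ℕ) + (N - 1)) % N = (N - ((1 : Fin N) : ℕ) + (i : ℕ)) % N
  have hN : 0 < N := Nat.pos_of_ne_zero (NeZero.ne N)
  rcases Nat.lt_or_ge 1 N with h | h
  · rw [Fin.val_one', Nat.mod_eq_of_lt h, Nat.add_comm]
  · have : N = 1 := by omega
    subst this
    simp [Nat.mod_one]

open Fin.CommRing in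
lemma shift_iterate [NeZero N] (a : Fin N → Fin A) (k : ℕ) (i : Fin N) :
    shift^[k] a i = a (i - (k : Fin N)) := by
  induction k generalizing i with
  | zero => simp
  | succ k ih =>
    rw [Function.iterate_succ_apply', shift_apply, ih]
    congr 1
    push_cast
    ring

open Fin.CommRing in
lemma shift_iterate_eq_iff [NeZero N] (a : Fin N → Fin A) (k : ℕ) :
    shift^[k] a = a ↔ ∀ i : Fin N, a (i + (k : Fin N)) = a i := by
  constructor
  · intro h i
    have := congrFun h (i + (k : Fin N))
    rw [shift_iterate, add_sub_cancel_right] at this; exact this.symm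
  · intro h
    funext i
    rw [shift_iterate]
    have := h (i - (k : Fin N))
    rw [sub_add_cancel] at this; exact this.symm

lemma isPeriodicPt_shift [NeZero N] (a : Fin N → Fin A) : Function.IsPeriodicPt shift N a := by
  show shift^[N] a = a
  rw [shift_iterate_eq_iff]
  intro i
  simp

lemma mem_periodicPts_shift [NeZero N] (a : Fin N → Fin A) :
    a ∈ Function.periodicPts shift :=
  ⟨N, Nat.pos_of_ne_zero (NeZero.ne N), isPeriodicPt_shift a⟩

lemma orbit_eq_range (a : Fin N → Fin A) :
    orbit a = Set.range (fun k : ℕ => shift^[k] a) := rfl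

lemma orbitSize_eq [NeZero N] (a : Fin N → Fin A) :
    orbitSize a = Function.minimalPeriod shift a := by
  have hp := mem_periodicPts_shift a
  have hpos := Function.minimalPeriod_pos_of_mem_periodicPts hp
  have himg : Set.range (fun k : ℕ => shift^[k] a)
      = (fun k : ℕ => shift^[k] a) '' Set.Iio (Function.minimalPeriod shift a) := by
    apply Set.Subset.antisymm
    · rintro _ ⟨k, rfl⟩
      exact ⟨k % _, Nat.mod_lt _ hpos, Function.iterate_mod_minimalPeriod_eq⟩
    · exact Set.image_subset_range _ _
  rw [orbitSize, orbit_eq_range, himg,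
    Set.ncard_image_of_injOn Function.iterate_injOn_Iio_minimalPeriod,
    ← Finset.coe_Iio, Set.ncard_coe_finset, Nat.card_Iio]

end Aux

section ResExt

variable {A N n : ℕ}

def resStr (h : n ≤ N) (a : Fin N → Fin A) : Fin n → Fin A :=
  fun j => a ⟨j, lt_of_lt_of_le j.isLt h⟩

def extStr [NeZero n] (b : Fin n → Fin A) : Fin N → Fin A :=
  fun i => b ⟨(i : ℕ) % n, Nat.mod_lt _ (Nat.pos_of_ne_zero (NeZero.ne n))⟩

lemma resStr_extStr [NeZero n] (h : n ≤ N) (b : Fin n → Fin A) :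
    resStr h (extStr b : Fin N → Fin A) = b := by
  funext j
  show b ⟨(j : ℕ) % n, _⟩ = b j
  congr 1
  exact Fin.ext (Nat.mod_eq_of_lt j.isLt)

lemma extStr_injective [NeZero n] (h : n ≤ N) :
    Function.Injective (extStr : (Fin n → Fin A) → (Fin N → Fin A)) :=
  Function.LeftInverse.injective (g := resStr h) (fun b => resStr_extStr h b)

open Fin.CommRing in
lemma extStr_resStr [NeZero N] [NeZero n] (h : n ≤ N) {a : Fin N → Fin A}
    (ha : shift^[n] a = a) : extStr (resStr h a) = a := by
  rw [shift_iterate_eq_iff] at ha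
  have hnpos : 0 < n := Nat.pos_of_ne_zero (NeZero.ne n)
  have key : ∀ m : ℕ, ∀ hm : m < N,
      a ⟨m % n, lt_of_lt_of_le (Nat.mod_lt _ hnpos) h⟩ = a ⟨m, hm⟩ := by
    intro m
    induction m using Nat.strong_induction_on with
    | _ m ih =>
      intro hm
      rcases Nat.lt_or_ge m n with hlt | hge
      · congr 1
        exact Fin.ext (Nat.mod_eq_of_lt hlt)
      · have hnN : n < N := lt_of_le_of_lt hge hm
        have hm' : m - n < N := by omega
        have step : (⟨m - n, hm'⟩ : Fin N) + (n : Fin N) = ⟨m, hm⟩ := by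
          apply Fin.ext
          rw [Fin.add_def]
          show ((m - n) + ((n : Fin N) : ℕ)) % N = m
          rw [Fin.val_natCast, Nat.mod_eq_of_lt hnN, Nat.sub_add_cancel hge,
            Nat.mod_eq_of_lt hm]
        calc a ⟨m % n, _⟩ = a ⟨(m - n) % n, lt_of_lt_of_le (Nat.mod_lt _ hnpos) h⟩ := by
              congr 1
              apply Fin.ext
              show m % n = (m - n) % n
              conv_lhs => rw [← Nat.sub_add_cancel hge]
              rw [Nat.add_mod_right]
          _ = a ⟨m - n, hm'⟩ := ih (m - n) (by omega) hm'
          _ = a ⟨m, hm⟩ := by rw [← step]; exact (ha _).symm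
  funext i
  show a ⟨(i : ℕ) % n, _⟩ = a i
  exact key i.val i.isLt

lemma shift_extStr [NeZero N] [NeZero n] (hn : n ∣ N) (b : Fin n → Fin A) :
    shift (extStr b : Fin N → Fin A) = extStr (shift b) := by
  have hnpos : 0 < n := Nat.pos_of_ne_zero (NeZero.ne n)
  have hNpos : 0 < N := Nat.pos_of_ne_zero (NeZero.ne N)
  have hle : n ≤ N := Nat.le_of_dvd hNpos hn
  funext i
  rw [shift_apply]
  show b ⟨((i - 1 : Fin N) : ℕ) % n, _⟩ = shift b ⟨(i : ℕ) % n, _⟩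
  rw [shift_apply]
  congr 1
  apply Fin.ext
  show ((i - 1 : Fin N) : ℕ) % n = (((⟨(i : ℕ) % n, _⟩ : Fin n) - 1 : Fin n) : ℕ)
  rw [Fin.sub_def, Fin.sub_def]
  show (N - ((1 : Fin N) : ℕ) + (i : ℕ)) % N % n
      = (n - ((1 : Fin n) : ℕ) + (i : ℕ) % n) % n
  rcases Nat.lt_or_ge 1 n with h2 | h2
  · have h2N : 1 < N := lt_of_lt_of_le h2 hle
    rw [Fin.val_one', Fin.val_one', Nat.mod_eq_of_lt h2, Nat.mod_eq_of_lt h2N,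
      Nat.mod_mod_of_dvd _ hn]
    obtain ⟨q, hq⟩ := hn
    have hq1 : 1 ≤ q := by
      rcases Nat.eq_zero_or_pos q with h0 | h0
      · subst h0; simp at hq; omega
      · exact h0
    have hkey : N - 1 = n - 1 + n * (q - 1) := by
      rcases q with _ | q
      · rw [Nat.mul_zero] at hq; omega
      · have e1 : n * (q + 1) = n * q + n := by ring
        rw [hq, e1, Nat.add_sub_cancel]
        generalize n * q = t
        omega
    have hsplit : N - 1 + (i : ℕ) = (n - 1 + (i : ℕ)) + n * (q - 1) := by
      rw [hkey]; ring
    rw [hsplit, Nat.add_mul_mod_self_left]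
    conv_rhs => rw [Nat.add_mod, Nat.mod_mod_of_dvd _ (dvd_refl n), ← Nat.add_mod]
  · have hn1 : n = 1 := by omega
    subst hn1
    simp [Nat.mod_one]

lemma aux_sum (g : ℕ → ℕ) (n q : ℕ) :
    ∑ m ∈ Finset.range (n * q), g (m % n) = q * ∑ m ∈ Finset.range n, g (m % n) := by
  induction q with
  | zero => simp
  | succ q ih =>
    rw [show n * (q + 1) = n * q + n by ring, Finset.sum_range_add, ih]
    have : ∀ x, (n * q + x) % n = x % n := fun x => by
      rw [Nat.add_comm, Nat.add_mul_mod_self_left]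
    simp_rw [this]
    ring

lemma strSum_extStr [NeZero N] [NeZero n] (hn : n ∣ N) (b : Fin n → Fin A) :
    strSum (extStr b : Fin N → Fin A) = (N / n) * strSum b := by
  have hnpos : 0 < n := Nat.pos_of_ne_zero (NeZero.ne n)
  set g : ℕ → ℕ := fun m => (b ⟨m % n, Nat.mod_lt _ hnpos⟩ : ℕ) with hg
  have hgg : ∀ m, g (m % n) = g m := by
    intro m
    exact congrArg (fun z : Fin n => ((b z : ℕ))) (Fin.ext (Nat.mod_mod_of_dvd m (dvd_refl n)))
  have h1 : strSum (extStr b : Fin N → Fin A) = ∑ m ∈ Finset.range N, g m := by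
    rw [strSum, ← Fin.sum_univ_eq_sum_range]
    rfl
  have h2 : strSum b = ∑ m ∈ Finset.range n, g m := by
    rw [strSum, ← Fin.sum_univ_eq_sum_range]
    apply Finset.sum_congr rfl
    intro i _
    exact congrArg (fun z : Fin n => ((b z : ℕ))) (Fin.ext (Nat.mod_eq_of_lt i.isLt)).symm
  obtain ⟨q, hq⟩ := hn
  rw [h1, h2, hq, Nat.mul_div_cancel_left _ hnpos]
  calc ∑ m ∈ Finset.range (n * q), g m
      = ∑ m ∈ Finset.range (n * q), g (m % n) := by simp_rw [hgg]
    _ = q * ∑ m ∈ Finset.range n, g (m % n) := aux_sum g n q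
    _ = q * ∑ m ∈ Finset.range n, g m := by simp_rw [hgg]

lemma extStr_iterate [NeZero N] [NeZero n] (hn : n ∣ N) (k : ℕ) (b : Fin n → Fin A) :
    shift^[k] (extStr b : Fin N → Fin A) = extStr (shift^[k] b) := by
  induction k with
  | zero => rfl
  | succ k ih =>
    rw [Function.iterate_succ_apply', ih, shift_extStr hn]
    exact congrArg extStr (Function.iterate_succ_apply' _ _ _).symm

lemma minimalPeriod_extStr [NeZero N] [NeZero n] (hn : n ∣ N) (b : Fin n → Fin A) :
    Function.minimalPeriod shift (extStr b : Fin N → Fin A)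
      = Function.minimalPeriod shift b := by
  have hle : n ≤ N := Nat.le_of_dvd (Nat.pos_of_ne_zero (NeZero.ne N)) hn
  rw [Function.minimalPeriod_eq_minimalPeriod_iff]
  intro k
  simp only [Function.IsPeriodicPt, Function.IsFixedPt]
  rw [extStr_iterate hn]
  exact ⟨fun h => extStr_injective hle h, fun h => by rw [h]⟩

lemma orbit_resStr_image [NeZero N] [NeZero n] (hn : n ∣ N) (hle : n ≤ N) (b : Fin n → Fin A) :
    resStr hle '' orbit (extStr b : Fin N → Fin A) = orbit b := by
  ext c
  simp only [orbit, Set.mem_image, Set.mem_setOf_eq]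
  constructor
  · rintro ⟨x, ⟨k, rfl⟩, rfl⟩
    exact ⟨k, by rw [extStr_iterate hn, resStr_extStr]⟩
  · rintro ⟨k, rfl⟩
    exact ⟨shift^[k] (extStr b), ⟨k, rfl⟩, by rw [extStr_iterate hn, resStr_extStr]⟩

lemma orbit_extStr_image [NeZero N] [NeZero n] (hn : n ∣ N) (b : Fin n → Fin A) :
    (extStr : (Fin n → Fin A) → (Fin N → Fin A)) '' orbit b
      = orbit (extStr b : Fin N → Fin A) := by
  ext c
  simp only [orbit, Set.mem_image, Set.mem_setOf_eq]
  constructor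
  · rintro ⟨x, ⟨k, rfl⟩, rfl⟩
    exact ⟨k, by rw [extStr_iterate hn]⟩
  · rintro ⟨k, rfl⟩
    exact ⟨shift^[k] b, ⟨k, rfl⟩, by rw [extStr_iterate hn]⟩

end ResExt

/-- If `n ∣ N` and `N ∣ M·n`, then `N(A,N,M,n) = N(A,n,M·n/N,n)` (the number of cycles of
order `n` among strings of length `N` with sum `M` equals the number of cycles of order `n`
among strings of length `n` with sum `M·n/N`), equivalently
`M(A,N,M,n) = M(A,n,M·n/N,n)`; otherwise there are no strings of length `N` with sum `M`
and orbit size `n`. -/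
theorem stmt_7 (A N M n : ℕ) (hA : 1 ≤ A) (hN : 1 ≤ N) :
    (n ∣ N → N ∣ M * n →
      Ncount A N M n = Ncount A n (M * n / N) n ∧
      Mcount A N M n = Mcount A n (M * n / N) n) ∧
    (¬ (n ∣ N ∧ N ∣ M * n) → Mcount A N M n = 0) := by
  have hNz : NeZero N := ⟨by omega⟩
  have hNpos : 0 < N := hN
  constructor
  · intro hn hMn
    have hnpos : 0 < n := Nat.pos_of_dvd_of_pos hn hNpos
    have hnz : NeZero n := ⟨hnpos.ne'⟩
    have hle : n ≤ N := Nat.le_of_dvd hNpos hn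
    have hfix : ∀ a : Fin N → Fin A, orbitSize a = n → extStr (resStr hle a) = a := by
      intro a ha
      apply extStr_resStr hle
      have hmp : Function.minimalPeriod shift a = n := by rw [← orbitSize_eq]; exact ha
      rw [← hmp]
      exact Function.iterate_minimalPeriod
    have hsum_res : ∀ a : Fin N → Fin A, strSum a = M → orbitSize a = n →
        strSum (resStr hle a) = M * n / N := by
      intro a h1 h2
      have hx : (N / n) * strSum (resStr hle a) = M := by
        rw [← strSum_extStr hn (resStr hle a), hfix a h2, h1]
      have hy : M * n = N * strSum (resStr hle a) := by
        rw [← hx, mul_right_comm, Nat.div_mul_cancel hn]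
      rw [hy, Nat.mul_div_cancel_left _ hNpos]
    have horb_res : ∀ a : Fin N → Fin A, orbitSize a = n → orbitSize (resStr hle a) = n := by
      intro a h2
      rw [orbitSize_eq, ← minimalPeriod_extStr hn, hfix a h2, ← orbitSize_eq, h2]
    have hsum_ext : ∀ b : Fin n → Fin A, strSum b = M * n / N →
        strSum (extStr b : Fin N → Fin A) = M := by
      intro b h1
      obtain ⟨t, ht⟩ := hMn
      have h1' : strSum b = t := by rw [h1, ht, Nat.mul_div_cancel_left _ hNpos]
      rw [strSum_extStr hn, h1']
      apply Nat.eq_of_mul_eq_mul_right hnpos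
      calc N / n * t * n = N / n * n * t := by ring
        _ = N * t := by rw [Nat.div_mul_cancel hn]
        _ = M * n := ht.symm
    have horb_ext : ∀ b : Fin n → Fin A, orbitSize b = n →
        orbitSize (extStr b : Fin N → Fin A) = n := by
      intro b h2
      rw [orbitSize_eq, minimalPeriod_extStr hn, ← orbitSize_eq, h2]
    set S1 := {a : Fin N → Fin A | strSum a = M ∧ orbitSize a = n} with hS1
    set S2 := {b : Fin n → Fin A | strSum b = M * n / N ∧ orbitSize b = n} with hS2
    have himg : resStr hle '' S1 = S2 := by
      apply Set.Subset.antisymm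
      · rintro _ ⟨a, ⟨h1, h2⟩, rfl⟩
        exact ⟨hsum_res a h1 h2, horb_res a h2⟩
      · rintro b ⟨h1, h2⟩
        exact ⟨extStr b, ⟨hsum_ext b h1, horb_ext b h2⟩, resStr_extStr hle b⟩
    have hinj : Set.InjOn (resStr hle) S1 := by
      intro a ha a' ha' hres
      rw [← hfix a ha.2, ← hfix a' ha'.2, hres]
    have hM : Mcount A N M n = Mcount A n (M * n / N) n := by
      unfold Mcount
      rw [← hS1, ← hS2, ← himg, Set.ncard_image_of_injOn hinj]
    refine ⟨?_, hM⟩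
    unfold Ncount
    set O1 := {o : Set (Fin N → Fin A) | ∃ a, strSum a = M ∧ orbitSize a = n ∧ o = orbit a}
      with hO1
    set O2 := {o : Set (Fin n → Fin A) |
      ∃ b, strSum b = M * n / N ∧ orbitSize b = n ∧ o = orbit b} with hO2
    have hFimg : (Set.image (resStr hle)) '' O1 = O2 := by
      apply Set.Subset.antisymm
      · rintro _ ⟨o, ⟨a, h1, h2, rfl⟩, rfl⟩
        refine ⟨resStr hle a, hsum_res a h1 h2, horb_res a h2, ?_⟩
        conv_lhs => rw [← hfix a h2]
        rw [orbit_resStr_image hn hle]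
      · rintro o ⟨b, h1, h2, rfl⟩
        refine ⟨orbit (extStr b : Fin N → Fin A),
          ⟨extStr b, hsum_ext b h1, horb_ext b h2, rfl⟩, ?_⟩
        rw [orbit_resStr_image hn hle]
    have hFinj : Set.InjOn (Set.image (resStr hle)) O1 := by
      have hback : ∀ o ∈ O1, (Set.image (extStr)) ((Set.image (resStr hle)) o) = o := by
        rintro _ ⟨a, h1, h2, rfl⟩
        conv_lhs => rw [← hfix a h2]
        rw [orbit_resStr_image hn hle, orbit_extStr_image hn, hfix a h2]
      intro o ho o' ho' he
      rw [← hback o ho, ← hback o' ho', he]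
    rw [← hFimg, Set.ncard_image_of_injOn hFinj]
  · intro h
    unfold Mcount
    rw [Set.ncard_eq_zero (Set.toFinite _), Set.eq_empty_iff_forall_notMem]
    rintro a ⟨h1, h2⟩
    apply h
    have hmp : Function.minimalPeriod shift a = n := by rw [← orbitSize_eq]; exact h2
    have hdvd : n ∣ N := by rw [← hmp]; exact (isPeriodicPt_shift a).minimalPeriod_dvd
    refine ⟨hdvd, ?_⟩
    have hnpos : 0 < n := Nat.pos_of_dvd_of_pos hdvd hNpos
    have hnz : NeZero n := ⟨hnpos.ne'⟩
    have hle : n ≤ N := Nat.le_of_dvd hNpos hdvd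
    have hfix : extStr (resStr hle a) = a := by
      apply extStr_resStr hle
      rw [← hmp]
      exact Function.iterate_minimalPeriod
    refine ⟨strSum (resStr hle a), ?_⟩
    have hx := strSum_extStr (A := A) hdvd (resStr hle a)
    rw [hfix, h1] at hx
    rw [hx, mul_right_comm, Nat.div_mul_cancel hdvd]
end

section
/- If K is a squarefree natural number that is the product of ν distinct primes (ν ≥ 0), then Δ_K = (−1)^ν, where Δ_K is the number of even-length ordered factorizations of K into factors ≥ 2 minus the number of odd-length such factorizations. -/
/-- `L` is an ordered factorization of `K` into factors `≥ 2`. -/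
def IsOrderedFactorization (K : ℕ) (L : List ℕ) : Prop :=
  (∀ x ∈ L, 2 ≤ x) ∧ L.prod = K

/-- `Δ_K`: the number of even-length ordered factorizations of `K` into factors `≥ 2`
minus the number of odd-length such factorizations. -/
noncomputable def Delta (K : ℕ) : ℤ :=
  (Set.ncard {L : List ℕ | IsOrderedFactorization K L ∧ Even L.length} : ℤ) -
  (Set.ncard {L : List ℕ | IsOrderedFactorization K L ∧ Odd L.length} : ℤ)

/-- The finset of ordered factorizations of `K` into factors `≥ 2`. -/
def OFFinset : ℕ → Finset (List ℕ)
  | 0 => ∅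
  | 1 => {[]}
  | (n+2) => ((Nat.divisors (n+2)).filter (fun d => 2 ≤ d)).attach.biUnion
      (fun d => (OFFinset ((n+2) / d.1)).image (fun M => d.1 :: M))
decreasing_by
  have hd := d.2
  simp only [Finset.mem_filter, Nat.mem_divisors] at hd
  exact Nat.div_lt_self (by omega) (by omega)

lemma mem_OFFinset (K : ℕ) (L : List ℕ) :
    L ∈ OFFinset K ↔ IsOrderedFactorization K L := by
  induction K using Nat.strong_induction_on generalizing L with
  | _ K ih =>
    match K with
    | 0 =>
      simp only [OFFinset, Finset.notMem_empty, false_iff]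
      rintro ⟨h2, hp⟩
      have : 0 < L.prod := List.prod_pos (fun x hx => by have := h2 x hx; omega)
      omega
    | 1 =>
      simp only [OFFinset, Finset.mem_singleton]
      constructor
      · rintro rfl; exact ⟨by simp, by simp⟩
      · rintro ⟨h2, hp⟩
        cases L with
        | nil => rfl
        | cons a M =>
          exfalso
          have ha : 2 ≤ a := h2 a (by simp)
          have hM : 0 < M.prod := List.prod_pos (fun x hx => by
            have := h2 x (by simp [hx]); omega)
          simp only [List.prod_cons] at hp
          nlinarith
    | (n+2) =>
      rw [OFFinset]
      simp only [Finset.mem_biUnion, Finset.mem_attach, true_and, Finset.mem_image,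
        Subtype.exists, Finset.mem_filter, Nat.mem_divisors]
      constructor
      · rintro ⟨d, ⟨⟨hdvd, -⟩, hd2⟩, M, hM, rfl⟩
        rw [ih _ (Nat.div_lt_self (by omega) (by omega))] at hM
        obtain ⟨hM2, hMp⟩ := hM
        refine ⟨?_, ?_⟩
        · intro x hx
          rcases List.mem_cons.mp hx with rfl | hx
          · exact hd2
          · exact hM2 x hx
        · simp only [List.prod_cons, hMp]
          exact (Nat.mul_div_cancel' hdvd)
      · rintro ⟨h2, hp⟩
        cases L with
        | nil => simp at hp
        | cons a M =>
          simp only [List.prod_cons] at hp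
          have ha : 2 ≤ a := h2 a (by simp)
          have hdvd : a ∣ n + 2 := ⟨M.prod, hp.symm⟩
          refine ⟨a, ⟨⟨hdvd, by omega⟩, ha⟩, M, ?_, rfl⟩
          rw [ih _ (Nat.div_lt_self (by omega) (by omega))]
          refine ⟨fun x hx => h2 x (by simp [hx]), ?_⟩
          rw [← hp, Nat.mul_div_cancel_left _ (by omega)]

/-- Signed count of factorizations. -/
def gOF (K : ℕ) : ℤ := ∑ L ∈ OFFinset K, (-1 : ℤ) ^ L.length

lemma Delta_eq_gOF (K : ℕ) : Delta K = gOF K := by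
  have he : {L : List ℕ | IsOrderedFactorization K L ∧ Even L.length} =
      ↑((OFFinset K).filter (fun L => Even L.length)) := by
    ext L; simp [mem_OFFinset]
  have ho : {L : List ℕ | IsOrderedFactorization K L ∧ Odd L.length} =
      ↑((OFFinset K).filter (fun L => Odd L.length)) := by
    ext L; simp [mem_OFFinset]
  rw [Delta, he, ho, Set.ncard_coe_finset, Set.ncard_coe_finset, gOF]
  rw [← Finset.sum_filter_add_sum_filter_not (OFFinset K) (fun L => Even L.length)]
  have h1 : ∀ L ∈ (OFFinset K).filter (fun L => Even L.length),
      (-1 : ℤ) ^ L.length = 1 := by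
    intro L hL
    simp only [Finset.mem_filter] at hL
    exact Even.neg_one_pow hL.2
  have h2 : ∀ L ∈ (OFFinset K).filter (fun L => ¬ Even L.length),
      (-1 : ℤ) ^ L.length = -1 := by
    intro L hL
    simp only [Finset.mem_filter] at hL
    exact Odd.neg_one_pow (Nat.not_even_iff_odd.mp hL.2)
  rw [Finset.sum_congr rfl h1, Finset.sum_congr rfl h2]
  simp only [Finset.sum_const, nsmul_eq_mul, mul_one, mul_neg_one]
  have : (OFFinset K).filter (fun L => Odd L.length) =
      (OFFinset K).filter (fun L => ¬ Even L.length) := by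
    apply Finset.filter_congr; intro L _
    exact Nat.not_even_iff_odd.symm
  rw [this]; ring

lemma gOF_zero : gOF 0 = 0 := by simp [gOF, OFFinset]

lemma gOF_one : gOF 1 = 1 := by simp [gOF, OFFinset]

lemma gOF_rec (n : ℕ) (hn : 2 ≤ n) :
    gOF n = -∑ d ∈ (Nat.divisors n).filter (fun d => 2 ≤ d), gOF (n / d) := by
  obtain ⟨m, rfl⟩ : ∃ m, n = m + 2 := ⟨n - 2, by omega⟩
  rw [gOF, OFFinset]
  rw [Finset.sum_biUnion]
  · rw [← Finset.sum_attach ((Nat.divisors (m+2)).filter (fun d => 2 ≤ d))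
      (fun d => gOF ((m+2) / d))]
    rw [← Finset.sum_neg_distrib]
    apply Finset.sum_congr rfl
    intro d _
    rw [Finset.sum_image (by intro a _ b _ h; exact (List.cons.injEq _ _ _ _ ▸ h).2)]
    rw [gOF, ← Finset.sum_neg_distrib]
    apply Finset.sum_congr rfl
    intro M _
    simp [pow_succ]
  · intro a _ b _ hab
    simp only [Finset.disjoint_left, Finset.mem_image]
    rintro L ⟨M, _, rfl⟩ ⟨M', _, hM'⟩
    exact hab (Subtype.ext ((List.cons.injEq _ _ _ _ ▸ hM'.symm).1))

/-- The signed count as an arithmetic function. -/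
def gAF : ArithmeticFunction ℤ := ⟨gOF, gOF_zero⟩

lemma zeta_mul_gAF : (↑ArithmeticFunction.zeta * gAF : ArithmeticFunction ℤ) = 1 := by
  ext n
  rw [ArithmeticFunction.coe_zeta_mul_apply]
  match n with
  | 0 => simp
  | 1 => simp [gAF, gOF_one]
  | (m+2) =>
    have h1 : (1 : ℤ) ≠ 0 := one_ne_zero
    rw [ArithmeticFunction.one_apply]
    simp only [show m + 2 ≠ 1 by omega, if_false]
    have key : ∑ d ∈ (m+2).divisors, gAF d = ∑ d ∈ (m+2).divisors, gAF ((m+2) / d) :=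
      (Nat.sum_div_divisors (m+2) gAF).symm
    rw [key]
    have hsplit : (m+2).divisors = insert 1 ((m+2).divisors.filter (fun d => 2 ≤ d)) := by
      ext d
      simp only [Finset.mem_insert, Finset.mem_filter]
      constructor
      · intro hd
        have hpos : 0 < d := Nat.pos_of_mem_divisors hd
        by_cases h1 : d = 1
        · left; exact h1
        · right; exact ⟨hd, by omega⟩
      · rintro (rfl | ⟨h, -⟩)
        · exact Nat.one_mem_divisors.mpr (by omega)
        · exact h
    rw [hsplit, Finset.sum_insert (by simp)]
    have : gAF ((m+2) / 1) = gOF (m+2) := by simp [gAF]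
    rw [this]
    have : ∑ d ∈ (m+2).divisors.filter (fun d => 2 ≤ d), gAF ((m+2)/d) =
        ∑ d ∈ (m+2).divisors.filter (fun d => 2 ≤ d), gOF ((m+2)/d) := rfl
    rw [this, gOF_rec (m+2) (by omega)]
    ring

lemma gAF_eq_moebius : gAF = ArithmeticFunction.moebius := by
  calc gAF = 1 * gAF := (one_mul _).symm
    _ = (ArithmeticFunction.moebius * ↑ArithmeticFunction.zeta) * gAF := by
        rw [ArithmeticFunction.moebius_mul_coe_zeta]
    _ = ArithmeticFunction.moebius * (↑ArithmeticFunction.zeta * gAF) := mul_assoc _ _ _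
    _ = ArithmeticFunction.moebius := by rw [zeta_mul_gAF, mul_one]

lemma moebius_prod_primes (P : Finset ℕ) (hP : ∀ p ∈ P, p.Prime) :
    ArithmeticFunction.moebius (∏ p ∈ P, p) = (-1 : ℤ) ^ P.card := by
  induction P using Finset.induction_on with
  | empty => simp
  | insert a s ha ih =>
    rw [Finset.prod_insert ha]
    have hap : a.Prime := hP a (Finset.mem_insert_self a s)
    have hcop : a.Coprime (∏ p ∈ s, p) := by
      apply Nat.Coprime.prod_right
      intro q hq
      exact (Nat.coprime_primes hap (hP q (Finset.mem_insert_of_mem hq))).mpr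
        (fun h => ha (h ▸ hq))
    rw [ArithmeticFunction.isMultiplicative_moebius.map_mul_of_coprime hcop]
    rw [ArithmeticFunction.moebius_apply_prime hap,
      ih (fun p hp => hP p (Finset.mem_insert_of_mem hp))]
    rw [Finset.card_insert_of_notMem ha, pow_succ]
    ring

/-- If `K` is the product of `ν` distinct primes (`ν ≥ 0`), then `Δ_K = (-1)^ν`. -/
theorem stmt_8 (K ν : ℕ) (P : Finset ℕ) (hP : ∀ p ∈ P, p.Prime)
    (hK : K = ∏ p ∈ P, p) (hν : ν = P.card) :
    Delta K = (-1 : ℤ) ^ ν := by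
  subst hK hν
  rw [Delta_eq_gOF]
  have h1 : gOF (∏ p ∈ P, p) = gAF (∏ p ∈ P, p) := rfl
  rw [h1, gAF_eq_moebius]
  exact moebius_prod_primes P hP
end

section
/- If in the prime factorization of the natural number K ≥ 1 at least one prime occurs with multiplicity two or more (i.e. K is not squarefree), then Δ_K = 0, where Δ_K is the number of even-length ordered factorizations of K into factors ≥ 2 minus the number of odd-length such factorizations. -/

lemma two_pow_len_le (L : List ℕ) (h2 : ∀ x ∈ L, 2 ≤ x) : 2 ^ L.length ≤ L.prod := by
  induction L with
  | nil => simp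
  | cons a t ih =>
    simp only [List.length_cons, List.prod_cons, pow_succ]
    calc 2 ^ t.length * 2 ≤ t.prod * a :=
          Nat.mul_le_mul (ih (fun x hx => h2 x (List.mem_cons_of_mem a hx)))
            (h2 a (List.mem_cons_self))
      _ = a * t.prod := Nat.mul_comm _ _

lemma OF_finite (K : ℕ) :
    {L : List ℕ | IsOrderedFactorization K L}.Finite := by
  rcases Nat.eq_zero_or_pos K with rfl | hK
  · convert Set.finite_empty
    ext L
    simp only [Set.mem_setOf_eq, Set.mem_empty_iff_false, iff_false]
    rintro ⟨h2, hprod⟩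
    have h := two_pow_len_le L h2
    rw [hprod] at h
    have := Nat.one_le_two_pow (n := L.length)
    omega
  apply Set.Finite.subset (Set.Finite.image (List.map (Fin.val (n := K+1)))
    (List.finite_length_le (α := Fin (K+1)) K))
  rintro L ⟨h2, hprod⟩
  have hmem : ∀ x ∈ L, x < K + 1 := by
    intro x hx
    have hdvd : x ∣ K := hprod ▸ List.dvd_prod hx
    exact Nat.lt_succ_of_le (Nat.le_of_dvd hK hdvd)
  refine ⟨L.attach.map (fun x => (⟨x.1, hmem x.1 x.2⟩ : Fin (K+1))), ?_, ?_⟩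
  · show (List.map _ L.attach).length ≤ K
    rw [List.length_map, List.length_attach]
    have h2l : 2 ^ L.length ≤ L.prod := two_pow_len_le L h2
    have : L.length < 2 ^ L.length := Nat.lt_two_pow_self
    omega
  · simp [List.map_map, Function.comp]

noncomputable def T (K : ℕ) : Finset (List ℕ) := (OF_finite K).toFinset

lemma mem_T {K : ℕ} {L : List ℕ} : L ∈ T K ↔ (∀ x ∈ L, 2 ≤ x) ∧ L.prod = K := by
  simp [T, Set.Finite.mem_toFinset, IsOrderedFactorization]

lemma T_one : T 1 = {[]} := by
  ext L
  simp only [mem_T, Finset.mem_singleton]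
  constructor
  · rintro ⟨h2, hprod⟩
    cases L with
    | nil => rfl
    | cons a t =>
      exfalso
      have h := two_pow_len_le (a :: t) h2
      rw [hprod] at h
      have : (1:ℕ) < 2 ^ (a :: t).length := by
        apply Nat.one_lt_two_pow; simp
      omega
  · rintro rfl; simp

lemma T_rec (K : ℕ) (hK : 2 ≤ K) :
    T K = (K.divisors.filter (fun d => 2 ≤ d)).biUnion
      (fun d => (T (K / d)).image (d :: ·)) := by
  ext L
  simp only [mem_T, Finset.mem_biUnion, Finset.mem_filter, Nat.mem_divisors,
    Finset.mem_image]
  constructor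
  · rintro ⟨h2, hprod⟩
    cases L with
    | nil => simp at hprod; omega
    | cons a t =>
      have ha : 2 ≤ a := h2 a (List.mem_cons_self)
      have hprod' : a * t.prod = K := by simpa using hprod
      refine ⟨a, ⟨⟨⟨t.prod, hprod'.symm⟩, by omega⟩, ha⟩, t, ?_, rfl⟩
      refine ⟨fun x hx => h2 x (List.mem_cons_of_mem a hx), ?_⟩
      rw [← hprod', Nat.mul_div_cancel_left _ (by omega : 0 < a)]
  · rintro ⟨d, ⟨⟨hdvd, hK0⟩, hd2⟩, t, ht, rfl⟩
    obtain ⟨ht2, htprod⟩ := ht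
    constructor
    · intro x hx
      rcases List.mem_cons.mp hx with rfl | hx
      · exact hd2
      · exact ht2 x hx
    · simp [htprod, Nat.mul_div_cancel' hdvd]

open ArithmeticFunction in
noncomputable def D (K : ℕ) : ℤ := ∑ L ∈ T K, (-1 : ℤ) ^ L.length

lemma D_one : D 1 = 1 := by simp [D, T_one]

lemma D_rec (K : ℕ) (hK : 2 ≤ K) :
    D K = -∑ d ∈ K.divisors.filter (fun d => 2 ≤ d), D (K / d) := by
  rw [D, T_rec K hK, Finset.sum_biUnion]
  · rw [← Finset.sum_neg_distrib]
    apply Finset.sum_congr rfl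
    intro d _
    rw [Finset.sum_image (by intro a _ b _ h; exact (List.cons_eq_cons.mp h).2)]
    rw [D, ← Finset.sum_neg_distrib]
    apply Finset.sum_congr rfl
    intro L _
    simp [pow_succ]
  · intro a ha b hb hab
    simp only [Finset.disjoint_left, Finset.mem_image]
    rintro L ⟨s, _, rfl⟩ ⟨t, _, h⟩
    exact hab (List.cons_eq_cons.mp h).1.symm

open ArithmeticFunction ArithmeticFunction.Moebius ArithmeticFunction.zeta in
lemma sum_moebius_divisors (K : ℕ) :
    ∑ d ∈ K.divisors, (μ d : ℤ) = if K = 1 then 1 else 0 := by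
  calc ∑ d ∈ K.divisors, (μ d : ℤ)
      = (μ * ζ : ArithmeticFunction ℤ) K := coe_mul_zeta_apply.symm
    _ = (1 : ArithmeticFunction ℤ) K := by rw [moebius_mul_coe_zeta]
    _ = if K = 1 then 1 else 0 := one_apply

open ArithmeticFunction ArithmeticFunction.Moebius ArithmeticFunction.zeta in
lemma D_eq_moebius : ∀ K : ℕ, 1 ≤ K → D K = μ K := by
  intro K
  induction K using Nat.strong_induction_on with
  | _ K ih =>
    intro hK
    rcases eq_or_lt_of_le hK with h1 | h2
    · rw [← h1, D_one]; simp
    · have hK2 : 2 ≤ K := h2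
      rw [D_rec K hK2]
      have hfilter : K.divisors.filter (fun d => 2 ≤ d) = K.divisors.erase 1 := by
        ext d
        simp only [Finset.mem_filter, Finset.mem_erase, Nat.mem_divisors]
        constructor
        · rintro ⟨hd, h2d⟩; exact ⟨by omega, hd⟩
        · rintro ⟨hd1, hd⟩
          have : 1 ≤ d := Nat.pos_of_dvd_of_pos hd.1 (by omega)
          exact ⟨hd, by omega⟩
      have hIH : ∀ d ∈ K.divisors.filter (fun d => 2 ≤ d), D (K / d) = μ (K / d) := by
        intro d hd
        simp only [Finset.mem_filter, Nat.mem_divisors] at hd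
        obtain ⟨⟨hdvd, _⟩, hd2⟩ := hd
        apply ih
        · exact Nat.div_lt_self (by omega) (by omega)
        · exact Nat.one_le_div_iff (by omega) |>.mpr (Nat.le_of_dvd (by omega) hdvd)
      rw [Finset.sum_congr rfl hIH, hfilter]
      have h1mem : 1 ∈ K.divisors := Nat.one_mem_divisors.mpr (by omega)
      have hsum : ∑ d ∈ K.divisors.erase 1, (μ (K / d) : ℤ) + (μ (K / 1) : ℤ)
          = ∑ d ∈ K.divisors, (μ (K / d) : ℤ) := Finset.sum_erase_add _ _ h1mem
      have htot : ∑ d ∈ K.divisors, (μ (K / d) : ℤ) = 0 := by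
        rw [Nat.sum_div_divisors K (fun d => (μ d : ℤ)), sum_moebius_divisors]
        simp [show K ≠ 1 by omega]
      rw [htot] at hsum
      simp only [Nat.div_one] at hsum
      omega


lemma Delta_eq_D (K : ℕ) : Delta K = D K := by
  have heven : {L : List ℕ | IsOrderedFactorization K L ∧ Even L.length}
      = ↑((T K).filter (fun L => Even L.length)) := by
    ext L
    simp only [Set.mem_setOf_eq, Finset.coe_filter, mem_T, IsOrderedFactorization]
  have hodd : {L : List ℕ | IsOrderedFactorization K L ∧ Odd L.length}
      = ↑((T K).filter (fun L => ¬ Even L.length)) := by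
    ext L
    simp only [Set.mem_setOf_eq, Finset.coe_filter, mem_T, IsOrderedFactorization,
      Nat.not_even_iff_odd]
  have h1 : ∑ L ∈ (T K).filter (fun L => Even L.length), (-1:ℤ) ^ L.length
      = ((T K).filter (fun L => Even L.length)).card := by
    rw [Finset.sum_congr rfl (fun L hL => Even.neg_one_pow (Finset.mem_filter.mp hL).2)]
    simp
  have h2 : ∑ L ∈ (T K).filter (fun L => ¬ Even L.length), (-1:ℤ) ^ L.length
      = -((T K).filter (fun L => ¬ Even L.length)).card := by
    rw [Finset.sum_congr rfl (fun L hL => Odd.neg_one_pow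
      (Nat.not_even_iff_odd.mp (Finset.mem_filter.mp hL).2))]
    simp
  rw [Delta, heven, hodd, Set.ncard_coe_finset, Set.ncard_coe_finset, D,
    ← Finset.sum_filter_add_sum_filter_not (T K) (fun L => Even L.length), h1, h2]
  ring

/-- If in the prime factorization of `K ≥ 1` some prime occurs with multiplicity at least
two (i.e. `K` is not squarefree), then `Δ_K = 0`. -/
theorem stmt_9 (K : ℕ) (hK : 1 ≤ K) (h : ∃ p : ℕ, p.Prime ∧ p ^ 2 ∣ K) :
    Delta K = 0 := by
  obtain ⟨p, hp, hdvd⟩ := h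
  have hnsq : ¬ Squarefree K := by
    intro hsq
    exact hp.one_lt.ne' (Nat.isUnit_iff.mp (hsq p (by rwa [← pow_two])))
  rw [Delta_eq_D, D_eq_moebius K hK, ArithmeticFunction.moebius_eq_zero_of_not_squarefree hnsq]
end

section
/- For every natural number K ≥ 1, Δ_K equals μ(K), the Möbius function of K, where Δ_K is the number of even-length ordered factorizations of K into factors ≥ 2 minus the number of odd-length such factorizations. -/
def facs : ℕ → Finset (List ℕ)
  | 0 => ∅
  | 1 => {[]}
  | (n+2) =>
    ((Nat.divisors (n+2)).filter (fun d => 2 ≤ d)).attach.biUnion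
      (fun d => (facs ((n+2) / d.1)).image (fun L => d.1 :: L))
decreasing_by
  · have hd := d.2
    simp only [Finset.mem_filter, Nat.mem_divisors] at hd
    exact Nat.div_lt_self (by omega) (by omega)

lemma mem_facs : ∀ K, 1 ≤ K → ∀ L, (L ∈ facs K ↔ IsOrderedFactorization K L) := by
  intro K
  induction K using Nat.strong_induction_on with
  | _ K ih =>
    intro hK L
    match K, hK with
    | 1, _ =>
      simp only [facs, Finset.mem_singleton, IsOrderedFactorization]
      constructor
      · rintro rfl; simp
      · rintro ⟨h2, hp⟩
        cases L with
        | nil => rfl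
        | cons a t =>
          have ha := h2 a (by simp)
          have : a ∣ 1 := ⟨t.prod, hp.symm⟩
          have := Nat.le_of_dvd one_pos this
          omega
    | (n+2), _ =>
      simp only [facs, Finset.mem_biUnion, Finset.mem_attach, Finset.mem_image, true_and,
        Subtype.exists, Finset.mem_filter, Nat.mem_divisors]
      constructor
      · rintro ⟨d, ⟨⟨hdvd, -⟩, hd2⟩, t, ht, rfl⟩
        have hq1 : 1 ≤ (n+2)/d := Nat.one_le_div_iff (by omega) |>.mpr (Nat.le_of_dvd (by omega) hdvd)
        have hlt : (n+2)/d < n+2 := Nat.div_lt_self (by omega) (by omega)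
        have ht' := (ih _ hlt hq1 t).mp ht
        refine ⟨?_, ?_⟩
        · intro x hx
          rcases List.mem_cons.mp hx with rfl | hx
          · exact hd2
          · exact ht'.1 x hx
        · simp [ht'.2, Nat.mul_div_cancel' hdvd]
      · rintro ⟨h2, hp⟩
        cases L with
        | nil => simp at hp
        | cons a t =>
          have ha := h2 a (by simp)
          have hdvd : a ∣ n+2 := ⟨t.prod, by simpa using hp.symm⟩
          have hlt : (n+2)/a < n+2 := Nat.div_lt_self (by omega) (by omega)
          have hq1 : 1 ≤ (n+2)/a := Nat.one_le_div_iff (by omega) |>.mpr (Nat.le_of_dvd (by omega) hdvd)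
          refine ⟨a, ⟨⟨hdvd, by omega⟩, ha⟩, t, ?_, rfl⟩
          refine (ih _ hlt hq1 t).mpr ⟨fun x hx => h2 x (List.mem_cons_of_mem _ hx), ?_⟩
          have hm : a * t.prod = n + 2 := by simpa using hp
          rw [← hm, Nat.mul_div_cancel_left _ (by omega : 0 < a)]
    | 0, h => omega

def S (K : ℕ) : ℤ := ∑ L ∈ facs K, (-1 : ℤ) ^ L.length

lemma delta_eq_S (K : ℕ) (hK : 1 ≤ K) : Delta K = S K := by
  have he : {L : List ℕ | IsOrderedFactorization K L ∧ Even L.length}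
      = ((facs K).filter (fun L => Even L.length) : Finset (List ℕ)) := by
    ext L
    simp [mem_facs K hK L, and_comm]
  have ho : {L : List ℕ | IsOrderedFactorization K L ∧ Odd L.length}
      = ((facs K).filter (fun L => Odd L.length) : Finset (List ℕ)) := by
    ext L
    simp [mem_facs K hK L, and_comm]
  rw [Delta, he, ho, Set.ncard_coe_finset, Set.ncard_coe_finset]
  rw [S, ← Finset.sum_filter_add_sum_filter_not (facs K) (fun L => Even L.length)]
  rw [Finset.sum_congr rfl (fun L hL => (Finset.mem_filter.mp hL).2.neg_one_pow),
    Finset.sum_congr rfl (fun L hL => (Nat.not_even_iff_odd.mp (Finset.mem_filter.mp hL).2).neg_one_pow)]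
  simp only [Finset.sum_const, nsmul_eq_mul, mul_one, mul_neg_one]
  have : ∀ L ∈ facs K, ¬ Even L.length ↔ Odd L.length := by
    intro L _; exact Nat.not_even_iff_odd
  rw [Finset.filter_congr this]
  ring

lemma S_rec (n : ℕ) :
    S (n+2) = -∑ d ∈ ((n+2).divisors.filter (fun d => 2 ≤ d)), S ((n+2)/d) := by
  rw [S, facs]
  rw [Finset.sum_biUnion]
  · rw [← Finset.sum_attach ((n+2).divisors.filter (fun d => 2 ≤ d)) (fun d => S ((n+2)/d))]
    rw [← Finset.sum_neg_distrib]
    refine Finset.sum_congr rfl ?_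
    intro d _
    rw [Finset.sum_image (by intro a _ b _ h; exact (List.cons.injEq _ _ _ _ ▸ h).2)]
    rw [S, ← Finset.sum_neg_distrib]
    refine Finset.sum_congr rfl ?_
    intro t _
    simp [pow_succ]
  · intro a _ b _ hab
    simp only [Finset.disjoint_left, Finset.mem_image]
    rintro L ⟨t, _, rfl⟩ ⟨s, _, h⟩
    apply hab
    have := (List.cons.injEq _ _ _ _ ▸ h.symm).1
    exact Subtype.ext this

lemma sum_moebius (K : ℕ) (hK : 2 ≤ K) :
    ∑ d ∈ K.divisors, (ArithmeticFunction.moebius d : ℤ) = 0 := by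
  have h : (ArithmeticFunction.moebius * (ArithmeticFunction.zeta : ArithmeticFunction ℤ)) K
      = (1 : ArithmeticFunction ℤ) K := by
    rw [ArithmeticFunction.moebius_mul_coe_zeta]
  rw [ArithmeticFunction.coe_mul_zeta_apply, ArithmeticFunction.one_apply] at h
  rw [h]
  simp; omega

/-- For every `K ≥ 1`, `Δ_K` equals the Möbius function `μ(K)`. -/
theorem stmt_10 (K : ℕ) (hK : 1 ≤ K) :
    Delta K = ArithmeticFunction.moebius K := by
  rw [delta_eq_S K hK]
  induction K using Nat.strong_induction_on with
  | _ K ih =>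
    match K, hK with
    | 1, _ => simp [S, facs]
    | (n+2), _ =>
      rw [S_rec n]
      have hstep : ∀ d ∈ ((n+2).divisors.filter (fun d => 2 ≤ d)),
          S ((n+2)/d) = ArithmeticFunction.moebius ((n+2)/d) := by
        intro d hd
        simp only [Finset.mem_filter, Nat.mem_divisors] at hd
        obtain ⟨⟨hdvd, -⟩, hd2⟩ := hd
        have hlt : (n+2)/d < n+2 := Nat.div_lt_self (by omega) (by omega)
        have hq1 : 1 ≤ (n+2)/d := Nat.one_le_div_iff (by omega) |>.mpr (Nat.le_of_dvd (by omega) hdvd)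
        exact ih _ hlt hq1
      rw [Finset.sum_congr rfl hstep]
      have hfull : ∑ d ∈ (n+2).divisors, (ArithmeticFunction.moebius ((n+2)/d) : ℤ) = 0 := by
        rw [Nat.sum_div_divisors]
        exact sum_moebius (n+2) (by omega)
      have hsplit : (n+2).divisors = insert 1 ((n+2).divisors.filter (fun d => 2 ≤ d)) := by
        ext d
        simp only [Finset.mem_insert, Finset.mem_filter, Nat.mem_divisors]
        constructor
        · rintro ⟨hdvd, hne⟩
          have : 1 ≤ d := Nat.one_le_iff_ne_zero.mpr (by rintro rfl; exact (by omega : ¬ n+2 = 0) (Nat.eq_zero_of_zero_dvd hdvd))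
          rcases Nat.lt_or_ge d 2 with h | h
          · left; omega
          · right; exact ⟨⟨hdvd, hne⟩, h⟩
        · rintro (rfl | ⟨h, -⟩)
          · exact ⟨one_dvd _, by omega⟩
          · exact h
      rw [hsplit, Finset.sum_insert (by simp)] at hfull
      simp only [Nat.div_one] at hfull
      linarith
end

section
/- For natural numbers A ≥ 1 and n ≥ 1, the number of cyclic-shift orbits (cycles) of size exactly n among strings of length n over the alphabet {0, …, A−1} equals (1/n) · ∑_{k | n} μ(n/k) · A^k, where μ is the Möbius function. -/
/-- The number of cycles (shift orbits) of size exactly `n` among strings of length `n`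
over `{0,…,A-1}`. -/
noncomputable def NcountTotal (A n : ℕ) : ℕ :=
  Set.ncard {o : Set (Fin n → Fin A) | ∃ a, orbitSize a = n ∧ o = orbit a}

namespace CycAux

def rot {n : ℕ} (k : ℕ) (i : Fin n) : Fin n := ⟨((i : ℕ) + k) % n, Nat.mod_lt _ i.pos⟩

lemma rot_rot {n : ℕ} (k l : ℕ) (i : Fin n) : rot k (rot l i) = rot (l + k) i := by
  simp [rot, Nat.mod_add_mod, Nat.add_assoc]

lemma rot_mul_n {n : ℕ} (k : ℕ) (i : Fin n) : rot (k * n) i = i := by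
  simp [rot, Nat.add_mul_mod_self_right, Nat.mod_eq_of_lt i.2]

lemma shift_iterate {A n : ℕ} (a : Fin n → Fin A) (k : ℕ) :
    shift^[k] a = fun i => a (rot (k * (n - 1)) i) := by
  induction k with
  | zero =>
      funext i
      show a i = a (rot (0 * (n-1)) i)
      rw [zero_mul]
      congr 1
      exact (Fin.ext (by simp [rot, Nat.mod_eq_of_lt i.2])).symm
  | succ k ih =>
      funext i
      rw [Function.iterate_succ_apply']
      show shift^[k] a _ = _
      rw [ih]
      show a (rot (k * (n-1)) (rot (n-1) i)) = _
      rw [rot_rot]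
      congr 1
      ring_nf

lemma isPeriodicPt_iff {A n : ℕ} (hn : 0 < n) (a : Fin n → Fin A) (k : ℕ) :
    Function.IsPeriodicPt shift k a ↔ ∀ i, a (rot k i) = a i := by
  have hkn : k + k * (n - 1) = k * n := by
    have : n - 1 + 1 = n := Nat.succ_pred_eq_of_pos hn
    calc k + k * (n - 1) = k * ((n-1) + 1) := by ring
    _ = k * n := by rw [this]
  have hinv : ∀ i : Fin n, rot (k * (n-1)) (rot k i) = i := by
    intro i; rw [rot_rot, hkn, rot_mul_n]
  have hinv' : ∀ i : Fin n, rot k (rot (k * (n-1)) i) = i := by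
    intro i; rw [rot_rot, (by omega : k * (n-1) + k = k + k * (n-1)), hkn, rot_mul_n]
  unfold Function.IsPeriodicPt Function.IsFixedPt
  rw [shift_iterate, funext_iff]
  constructor
  · intro h i
    have := h (rot k i)
    rw [hinv i] at this; exact this.symm
  · intro h i
    have := h (rot (k * (n-1)) i)
    rw [hinv' i] at this; exact this.symm

lemma isPeriodicPt_n {A n : ℕ} (hn : 0 < n) (a : Fin n → Fin A) :
    Function.IsPeriodicPt shift n a := by
  rw [isPeriodicPt_iff hn]
  intro i
  have : rot (n : ℕ) i = i := by simpa using rot_mul_n 1 i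
  rw [this]

lemma minimalPeriod_dvd {A n : ℕ} (hn : 0 < n) (a : Fin n → Fin A) :
    Function.minimalPeriod shift a ∣ n :=
  Function.isPeriodicPt_iff_minimalPeriod_dvd.mp (isPeriodicPt_n hn a)

lemma minimalPeriod_pos {A n : ℕ} (hn : 0 < n) (a : Fin n → Fin A) :
    0 < Function.minimalPeriod shift a :=
  (isPeriodicPt_n hn a).minimalPeriod_pos hn

lemma orbit_eq_image {A n : ℕ} (hn : 0 < n) (a : Fin n → Fin A) :
    orbit a = (fun k => shift^[k] a) '' Set.Iio (Function.minimalPeriod shift a) := by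
  ext b
  constructor
  · rintro ⟨k, rfl⟩
    exact ⟨k % Function.minimalPeriod shift a,
      Nat.mod_lt _ (minimalPeriod_pos hn a), Function.iterate_mod_minimalPeriod_eq⟩
  · rintro ⟨k, _, rfl⟩
    exact ⟨k, rfl⟩

lemma orbitSize_eq {A n : ℕ} (hn : 0 < n) (a : Fin n → Fin A) :
    orbitSize a = Function.minimalPeriod shift a := by
  rw [orbitSize, orbit_eq_image hn a,
    Set.ncard_image_of_injOn Function.iterate_injOn_Iio_minimalPeriod, ← Finset.coe_Iio,
    Set.ncard_coe_finset, Nat.card_Iio]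

lemma mem_orbit_self {A n : ℕ} (a : Fin n → Fin A) : a ∈ orbit a := ⟨0, rfl⟩

lemma orbit_eq_of_mem {A n : ℕ} (hn : 0 < n) {a b : Fin n → Fin A} (hb : b ∈ orbit a) :
    orbit b = orbit a := by
  obtain ⟨k, hk⟩ := hb
  ext c
  constructor
  · rintro ⟨l, rfl⟩
    exact ⟨l + k, by rw [Function.iterate_add_apply, hk]⟩
  · rintro ⟨l, rfl⟩
    refine ⟨l + (n * k - k), ?_⟩
    rw [← hk, ← Function.iterate_add_apply]
    have h1 : l + (n * k - k) + k = l + n * k := by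
      have : k ≤ n * k := Nat.le_mul_of_pos_left k hn
      omega
    rw [h1, Function.iterate_add_apply]
    congr 1
    exact (isPeriodicPt_n hn a).mul_const k

end CycAux

namespace CycAux

lemma card_periodic {A n : ℕ} (hn : 0 < n) {d : ℕ} (hd0 : 0 < d) (hd : d ∣ n) :
    Nat.card {a : Fin n → Fin A // ∀ i, a (rot d i) = a i} = A ^ d := by
  have hdn : d ≤ n := Nat.le_of_dvd hn hd
  have hmod : ∀ (a : Fin n → Fin A), (∀ i, a (rot d i) = a i) →
      ∀ (j : ℕ) (hj : j < n),
        a ⟨j, hj⟩ = a ⟨j % d, Nat.lt_of_lt_of_le (Nat.mod_lt _ hd0) hdn⟩ := by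
    intro a ha j
    induction j using Nat.strong_induction_on with
    | _ j ih =>
      intro hj
      by_cases hjd : j < d
      · congr 1; exact Fin.ext (Nat.mod_eq_of_lt hjd).symm
      · push_neg at hjd
        have h1 : j - d < j := by omega
        have h2 : j - d < n := by omega
        have h3 : rot d ⟨j - d, h2⟩ = ⟨j, hj⟩ := by
          apply Fin.ext
          show (j - d + d) % n = j
          rw [Nat.sub_add_cancel hjd, Nat.mod_eq_of_lt hj]
        calc a ⟨j, hj⟩ = a (rot d ⟨j - d, h2⟩) := by rw [h3]
          _ = a ⟨j - d, h2⟩ := ha _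
          _ = a ⟨(j - d) % d, Nat.lt_of_lt_of_le (Nat.mod_lt _ hd0) hdn⟩ := ih _ h1 h2
          _ = a ⟨j % d, Nat.lt_of_lt_of_le (Nat.mod_lt _ hd0) hdn⟩ := by
              congr 1; exact Fin.ext (Nat.mod_eq_sub_mod hjd).symm
  let e : {a : Fin n → Fin A // ∀ i, a (rot d i) = a i} ≃ (Fin d → Fin A) :=
  { toFun := fun a j => a.1 ⟨j, lt_of_lt_of_le j.2 hdn⟩
    invFun := fun b => ⟨fun i => b ⟨(i : ℕ) % d, Nat.mod_lt _ hd0⟩, by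
      intro i
      apply congrArg b
      apply Fin.ext
      show ((i : ℕ) + d) % n % d = (i : ℕ) % d
      rw [Nat.mod_mod_of_dvd _ hd, Nat.add_mod_right]⟩
    left_inv := by
      intro a
      apply Subtype.ext
      funext i
      have := hmod a.1 a.2 i i.2
      simp only [Fin.eta] at this
      exact this.symm
    right_inv := by
      intro b
      funext j
      show b ⟨(j : ℕ) % d, _⟩ = b j
      congr 1
      exact Fin.ext (Nat.mod_eq_of_lt j.2) }
  rw [Nat.card_congr e, Nat.card_eq_fintype_card]
  simp

end CycAux


/-- The number of cycles of size exactly `n` among strings of length `n ≥ 1` over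
`{0,…,A-1}` (`A ≥ 1`) equals `(1/n)·∑_{k ∣ n} μ(n/k)·A^k`. -/
theorem stmt_14 (A n : ℕ) (hA : 1 ≤ A) (hn : 1 ≤ n) :
    (NcountTotal A n : ℚ) =
      (1 / (n : ℚ)) *
        ∑ k ∈ n.divisors, (ArithmeticFunction.moebius (n / k) : ℚ) * (A : ℚ) ^ k := by
  classical
  have hn0 : 0 < n := hn
  set E := (Fin n → Fin A) with hE
  let F : ℕ → Finset E := fun e =>
    Finset.univ.filter (fun a => Function.minimalPeriod shift a = e)
  have horbitsize : ∀ a : E, orbitSize a = Function.minimalPeriod shift a :=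
    fun a => CycAux.orbitSize_eq hn0 a
  -- the grouped count
  have hsum : ∀ d > 0, d ∈ {d : ℕ | d ∣ n} →
      (∑ e ∈ d.divisors, ((F e).card : ℚ)) = (A : ℚ) ^ d := by
    intro d hd0 hdn
    have hdn : d ∣ n := hdn
    have h1 : Finset.univ.filter (fun a : E => Function.IsPeriodicPt shift d a)
        = d.divisors.biUnion F := by
      ext a
      simp only [Finset.mem_filter, Finset.mem_univ, true_and, Finset.mem_biUnion,
        Nat.mem_divisors, F]
      constructor
      · intro h
        exact ⟨Function.minimalPeriod shift a,
          ⟨Function.isPeriodicPt_iff_minimalPeriod_dvd.mp h, hd0.ne'⟩, rfl⟩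
      · rintro ⟨e, ⟨he, -⟩, rfl⟩
        exact Function.isPeriodicPt_iff_minimalPeriod_dvd.mpr he
    have h2 : (Finset.univ.filter (fun a : E => Function.IsPeriodicPt shift d a)).card
        = A ^ d := by
      calc (Finset.univ.filter (fun a : E => Function.IsPeriodicPt shift d a)).card
          = Fintype.card {a : E // Function.IsPeriodicPt shift d a} :=
            (Fintype.card_subtype _).symm
        _ = Nat.card {a : E // Function.IsPeriodicPt shift d a} :=
            (Nat.card_eq_fintype_card).symm
        _ = Nat.card {a : E // ∀ i, a (CycAux.rot d i) = a i} :=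
            Nat.card_congr (Equiv.subtypeEquivRight fun a => CycAux.isPeriodicPt_iff hn0 a d)
        _ = A ^ d := CycAux.card_periodic hn0 hd0 hdn
    have h3 : (∑ e ∈ d.divisors, (F e).card) = A ^ d := by
      rw [← h2, h1, Finset.card_biUnion]
      intro x hx y hy hxy
      simp only [Finset.disjoint_left, Finset.mem_filter, Finset.mem_univ, true_and, F]
      rintro a h h'
      exact hxy (h ▸ h'.symm ▸ rfl)
    exact_mod_cast h3
  -- Möbius inversion
  have hmoeb := (ArithmeticFunction.sum_eq_iff_sum_smul_moebius_eq_on (R := ℚ)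
      (f := fun e => ((F e).card : ℚ)) (g := fun d => (A : ℚ) ^ d)
      {d : ℕ | d ∣ n} (fun m k hmk hk => dvd_trans hmk hk)).mp hsum n hn0 (dvd_refl n)
  have hmoeb2 : ((F n).card : ℚ)
      = ∑ k ∈ n.divisors, (ArithmeticFunction.moebius (n / k) : ℚ) * (A : ℚ) ^ k := by
    rw [← hmoeb, Nat.sum_divisorsAntidiagonal'
      (f := fun x y => (ArithmeticFunction.moebius x) • ((A : ℚ) ^ y))]
    refine Finset.sum_congr rfl fun k hk => ?_
    rw [zsmul_eq_mul]
  -- orbits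
  let O : Finset (Set E) := (F n).image orbit
  have hNc : NcountTotal A n = O.card := by
    rw [NcountTotal, ← Set.ncard_coe_finset]
    congr 1
    ext o
    simp only [Set.mem_setOf_eq, Finset.coe_image, Set.mem_image, Finset.mem_coe,
      Finset.mem_filter, Finset.mem_univ, true_and, O, F]
    constructor
    · rintro ⟨a, ha, rfl⟩
      exact ⟨a, by rw [← horbitsize]; exact ha, rfl⟩
    · rintro ⟨a, ha, rfl⟩
      exact ⟨a, by rw [horbitsize]; exact ha, rfl⟩
  have hfib : (F n).card = O.card * n := by
    rw [Finset.card_eq_sum_card_fiberwise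
      (f := orbit) (t := O) (fun a ha => Finset.mem_image_of_mem orbit ha)]
    have hfibcard : ∀ o ∈ O, ((F n).filter (fun b => orbit b = o)).card = n := by
      intro o ho
      obtain ⟨a0, ha0, rfl⟩ := Finset.mem_image.mp ho
      have hset : ↑((F n).filter (fun b => orbit b = orbit a0)) = orbit a0 := by
        ext b
        simp only [Finset.coe_filter, Set.mem_setOf_eq, Finset.mem_filter, Finset.mem_univ,
          true_and, F]
        constructor
        · rintro ⟨-, h⟩
          rw [← h]; exact CycAux.mem_orbit_self b
        · intro hb
          have horb := CycAux.orbit_eq_of_mem hn0 hb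
          refine ⟨?_, horb⟩
          have hsz : orbitSize b = orbitSize a0 := by rw [orbitSize, orbitSize, horb]
          rw [← horbitsize, hsz, horbitsize]
          exact (Finset.mem_filter.mp ha0).2
      rw [← Set.ncard_coe_finset, hset]
      show orbitSize a0 = n
      rw [horbitsize]
      exact (Finset.mem_filter.mp ha0).2
    rw [Finset.sum_congr rfl hfibcard, Finset.sum_const, smul_eq_mul]
  rw [hNc]
  have hq : ((F n).card : ℚ) = (O.card : ℚ) * n := by exact_mod_cast hfib
  rw [hq] at hmoeb2
  rw [← hmoeb2]
  field_simp
end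

section
/- For all natural numbers A ≥ 1 and n ≥ 1, the integer n divides ∑_{k | n} μ(n/k) · A^k, where μ is the Möbius function and the sum runs over the divisors k of n. (For n prime this specializes to Fermat's little theorem, n | A^n − A.) -/
open ArithmeticFunction Finset

lemma keyP (A p m e : ℕ) (hp : p.Prime) (he : 1 ≤ e) :
    ((p : ℤ) ^ e) ∣ (A : ℤ) ^ (p ^ e * m) - (A : ℤ) ^ (p ^ (e - 1) * m) := by
  obtain ⟨e, rfl⟩ : ∃ e', e = e' + 1 := ⟨e - 1, (Nat.succ_pred_eq_of_pos he).symm⟩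
  have h : (p : ℤ) ∣ (A : ℤ) ^ (p * m) - (A : ℤ) ^ m := by
    haveI : Fact p.Prime := ⟨hp⟩
    rw [← ZMod.intCast_zmod_eq_zero_iff_dvd]
    push_cast
    rw [mul_comm, pow_mul, ZMod.pow_card, sub_self]
  have h2 := dvd_sub_pow_of_dvd_sub h e
  rw [← pow_mul, ← pow_mul] at h2
  have e1 : p ^ (e + 1) * m = p * m * p ^ e := by ring
  have e2 : p ^ (e + 1 - 1) * m = m * p ^ e := by simp; ring
  rw [e1, e2]; exact h2

lemma primepowDvd (A n p : ℕ) (hn : n ≠ 0) (hp : p ∈ n.primeFactors) :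
    ((p : ℤ) ^ n.factorization p) ∣
      ∑ d ∈ n.divisors, ArithmeticFunction.moebius d * (A : ℤ) ^ (n / d) := by
  classical
  have hpp : p.Prime := Nat.prime_of_mem_primeFactors hp
  -- restrict to squarefree divisors
  have h1 : ∑ d ∈ n.divisors, (moebius d : ℤ) * (A : ℤ) ^ (n / d)
      = ∑ d ∈ n.divisors.filter Squarefree, (moebius d : ℤ) * (A : ℤ) ^ (n / d) := by
    rw [Finset.sum_filter_of_ne]
    intro x hx h
    by_contra hs
    rw [moebius_eq_zero_of_not_squarefree hs] at h
    simp at h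
  rw [h1, Nat.sum_divisors_filter_squarefree hn]
  have hfac : (UniqueFactorizationMonoid.normalizedFactors n).toFinset = n.primeFactors := by
    rw [Nat.factors_eq]; simp [Nat.toFinset_factors]
  rw [hfac]
  set f : Finset ℕ → ℤ := fun t => (moebius t.val.prod : ℤ) * (A : ℤ) ^ (n / t.val.prod) with hf
  have hins : n.primeFactors = insert p (n.primeFactors.erase p) :=
    (Finset.insert_erase hp).symm
  rw [hins, Finset.sum_powerset_insert (Finset.notMem_erase p _), ← Finset.sum_add_distrib]
  apply Finset.dvd_sum
  intro t ht
  rw [Finset.mem_powerset] at ht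
  -- basic facts about t
  have hpt : p ∉ t := fun h => Finset.notMem_erase p _ (ht h)
  have htn : ∀ q ∈ t, q ∈ n.primeFactors := fun q hq =>
    Finset.mem_of_mem_erase (ht hq)
  set d := t.val.prod with hd
  have hdp : d = ∏ q ∈ t, q := by
    rw [hd, Finset.prod_eq_multiset_prod]; exact congrArg Multiset.prod (Multiset.map_id t.val).symm
  have hdvd : d ∣ n := by
    rw [hdp]
    apply Finset.prod_primes_dvd
    · intro q hq; exact (Nat.prime_of_mem_primeFactors (htn q hq)).prime
    · intro q hq; exact Nat.dvd_of_mem_primeFactors (htn q hq)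
  have hpd : ¬ p ∣ d := by
    rw [hdp]
    intro h
    obtain ⟨q, hq, hpq⟩ := hpp.prime.exists_mem_finset_dvd h
    have := (Nat.prime_dvd_prime_iff_eq hpp (Nat.prime_of_mem_primeFactors (htn q hq))).mp hpq
    exact hpt (this ▸ hq)
  set e := n.factorization p with hee
  have he : 1 ≤ e := hpp.factorization_pos_of_dvd hn (Nat.dvd_of_mem_primeFactors hp)
  have hd0 : d ≠ 0 := by
    intro h; exact hn (Nat.eq_zero_of_zero_dvd (h ▸ hdvd))
  have hnd0 : n / d ≠ 0 := by
    have := Nat.div_pos (Nat.le_of_dvd (Nat.pos_of_ne_zero hn) hdvd) (Nat.pos_of_ne_zero hd0)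
    omega
  have hfd : (n / d).factorization p = e := by
    have hmul : n = d * (n / d) := (Nat.mul_div_cancel' hdvd).symm
    have := congrArg (fun g => g p) (congrArg Nat.factorization hmul)
    simp only [Nat.factorization_mul hd0 hnd0, Finsupp.coe_add, Pi.add_apply] at this
    rw [Nat.factorization_eq_zero_of_not_dvd hpd] at this
    omega
  have hpe : p ^ e ∣ n / d := hfd ▸ Nat.ordProj_dvd (n / d) p
  set m := (n / d) / p ^ e with hmm
  have hm : n / d = p ^ e * m := (Nat.mul_div_cancel' hpe).symm
  have hm2 : n / (p * d) = p ^ (e - 1) * m := by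
    rw [mul_comm, ← Nat.div_div_eq_div_mul, hm]
    have hsp : p ^ e = p * p ^ (e - 1) := by
      rw [← pow_succ']
      congr 1
      omega
    rw [hsp, mul_assoc, Nat.mul_div_cancel_left _ hpp.pos]
  have hit : (insert p t).val.prod = p * d := by
    have h1 : (insert p t).val.prod = ∏ q ∈ insert p t, q := by
      rw [Finset.prod_eq_multiset_prod]
      exact congrArg Multiset.prod (Multiset.map_id _).symm
    rw [h1, Finset.prod_insert hpt, ← hdp]
  have hcop : Nat.Coprime p d := (hpp.coprime_iff_not_dvd).mpr hpd
  have hmu : (moebius (p * d) : ℤ) = - moebius d := by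
    rw [isMultiplicative_moebius.map_mul_of_coprime hcop, moebius_apply_prime hpp]
    ring
  show ((p : ℤ) ^ e) ∣ f t + f (insert p t)
  rw [hf]
  simp only [hit, ← hd, hmu, hm, hm2]
  have : (moebius d : ℤ) * (A : ℤ) ^ (p ^ e * m) + (- moebius d : ℤ) * (A : ℤ) ^ (p ^ (e - 1) * m)
      = (moebius d : ℤ) * ((A : ℤ) ^ (p ^ e * m) - (A : ℤ) ^ (p ^ (e - 1) * m)) := by ring
  rw [this]
  exact Dvd.dvd.mul_left (keyP A p m e hpp he) _

/-- Generalized Fermat: for all `A ≥ 1` and `n ≥ 1`, `n` divides `∑_{k ∣ n} μ(n/k)·A^k`,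
where `μ` is the Möbius function. (For `n` prime this is `n ∣ A^n - A`.) -/
theorem stmt_15 (A n : ℕ) (hA : 1 ≤ A) (hn : 1 ≤ n) :
    (n : ℤ) ∣ ∑ k ∈ n.divisors, ArithmeticFunction.moebius (n / k) * (A : ℤ) ^ k := by
  have hn0 : n ≠ 0 := by omega
  have hrw : ∑ k ∈ n.divisors, (moebius (n / k) : ℤ) * (A : ℤ) ^ k
      = ∑ d ∈ n.divisors, (moebius d : ℤ) * (A : ℤ) ^ (n / d) := by
    rw [← Nat.sum_div_divisors n (fun d => (moebius d : ℤ) * (A : ℤ) ^ (n / d))]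
    apply Finset.sum_congr rfl
    intro k hk
    rw [Nat.div_div_self (Nat.dvd_of_mem_divisors hk) hn0]
  rw [hrw]
  have hfac : (n : ℤ) = ∏ p ∈ n.primeFactors, (p : ℤ) ^ (n.factorization p) := by
    conv_lhs => rw [← Nat.factorization_prod_pow_eq_self hn0]
    rw [Nat.factorization_prod_pow_eq_self hn0]
    conv_lhs => rw [← Nat.factorization_prod_pow_eq_self hn0]
    rw [Finsupp.prod, Nat.support_factorization]
    push_cast
    rfl
  rw [hfac]
  apply Finset.prod_dvd_of_coprime
  · intro p hp q hq hne
    simp only [Function.onFun]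
    apply IsCoprime.pow
    rw [Nat.isCoprime_iff_coprime]
    exact (Nat.coprime_primes (Nat.prime_of_mem_primeFactors hp)
      (Nat.prime_of_mem_primeFactors hq)).mpr hne
  · intro p hp
    exact primepowDvd A n p hn0 hp
end

section
/- For natural numbers A ≥ 1 and N ≥ 1, the number M(A, N, M, n) of strings of length N over {0, …, A−1} with sum M whose cyclic-shift orbit has size exactly n does not depend on N in the following sense: if n | N and N | M·n, then M(A, N, M, n) = M(A, n, M·n/N, n); and summing over all admissible sums M, the total number of strings of length N whose orbit has size exactly n equals the number of strings of length n whose orbit has size exactly n, namely ∑_{k | n} μ(n/k) · A^k. -/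
section Aux
variable {A L : ℕ}

/-- `a` has cyclic period `d`. -/
def dper (d : ℕ) (a : Fin L → Fin A) : Prop :=
  ∀ i : Fin L, a ⟨((i : ℕ) + d) % L, Nat.mod_lt _ i.pos⟩ = a i

lemma dper_zero (a : Fin L → Fin A) : dper 0 a := by
  intro i; congr 1; ext; simp [Nat.mod_eq_of_lt i.2]

lemma dper_add {d e : ℕ} {a : Fin L → Fin A} (hd : dper d a) (he : dper e a) :
    dper (d + e) a := by
  intro i
  have h1 := he ⟨((i : ℕ) + d) % L, Nat.mod_lt _ i.pos⟩
  have h2 := hd i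
  rw [← h2, ← h1]
  congr 1
  ext
  simp [Nat.mod_add_mod, Nat.add_assoc]

lemma dper_self (a : Fin L → Fin A) : dper L a := by
  intro i; congr 1; ext; simp [Nat.add_mod_right, Nat.mod_eq_of_lt i.2]

lemma dper_nsmul {d : ℕ} {a : Fin L → Fin A} (hd : dper d a) (m : ℕ) : dper (m * d) a := by
  induction m with
  | zero => simpa using dper_zero a
  | succ k ih => have := dper_add ih hd; rwa [Nat.succ_mul]

lemma dper_of_add {x y : ℕ} {a : Fin L → Fin A} (hy : dper y a) (hxy : dper (x + y) a) :
    dper x a := by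
  intro i
  have h1 := hy ⟨((i : ℕ) + x) % L, Nat.mod_lt _ i.pos⟩
  have h2 := hxy i
  rw [← h2, ← h1]
  congr 1
  ext
  simp [Nat.mod_add_mod, Nat.add_assoc]

lemma dper_gcd {d e : ℕ} {a : Fin L → Fin A} (hd : dper d a) (he : dper e a) :
    dper (Nat.gcd d e) a := by
  induction d using Nat.strong_induction_on generalizing e with
  | _ d ih =>
    rcases Nat.eq_zero_or_pos d with h0 | h0
    · subst h0; simpa using he
    · rw [Nat.gcd_rec d e]
      apply ih (e % d) (Nat.mod_lt _ h0) _ hd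
      have h1 : dper (e % d + e / d * d) a := by
        have : e % d + e / d * d = e := Nat.mod_add_div' e d
        rw [this]; exact he
      exact dper_of_add (dper_nsmul hd _) h1

lemma shift_iterate_s18 (d : ℕ) (a : Fin L → Fin A) (i : Fin L) :
    shift^[d] a i = a ⟨((i : ℕ) + d * (L - 1)) % L, Nat.mod_lt _ i.pos⟩ := by
  induction d generalizing a with
  | zero => simp [Nat.mod_eq_of_lt i.2]
  | succ k ih =>
    rw [Function.iterate_succ_apply, ih (shift a)]
    show a _ = a _
    congr 1
    ext
    show (((i : ℕ) + k * (L - 1)) % L + (L - 1)) % L = ((i : ℕ) + (k + 1) * (L - 1)) % L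
    rw [Nat.mod_add_mod, Nat.add_assoc, Nat.succ_mul]

lemma shift_iterate_eq_self_iff {d : ℕ} {a : Fin L → Fin A} :
    shift^[d] a = a ↔ dper d a := by
  have hL : ∀ i : Fin L, 0 < L := fun i => i.pos
  constructor
  · intro h i
    have h2 := congrFun h ⟨((i : ℕ) + d) % L, Nat.mod_lt _ i.pos⟩
    rw [shift_iterate_s18] at h2
    have key : (((i : ℕ) + d) % L + d * (L - 1)) % L = (i : ℕ) := by
      rw [Nat.mod_add_mod]
      have h3 : (i : ℕ) + d + d * (L - 1) = (i : ℕ) + d * L := by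
        have : 0 < L := i.pos
        cases L with
        | zero => omega
        | succ m =>
          simp only [Nat.succ_sub_one]
          ring
      rw [h3, Nat.add_mul_mod_self_right, Nat.mod_eq_of_lt i.2]
    rw [← h2]
    congr 1
    ext
    show (((i : ℕ) + d) % L + d * (L - 1)) % L = (i : ℕ)
    exact key
  · intro h
    funext i
    rw [shift_iterate_s18]
    have := dper_nsmul h (L - 1)
    have h2 := this i
    rw [← h2]
    congr 1
    ext
    show ((i : ℕ) + d * (L - 1)) % L = ((i : ℕ) + (L - 1) * d) % L
    rw [Nat.mul_comm]

/-- The minimal positive cyclic period. -/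
noncomputable def per (a : Fin L → Fin A) : ℕ := sInf {d | 0 < d ∧ dper d a}

lemma per_mem {a : Fin L → Fin A} (hL : 0 < L) : 0 < per a ∧ dper (per a) a :=
  Nat.sInf_mem (⟨L, hL, dper_self a⟩ : Set.Nonempty {d | 0 < d ∧ dper d a})

lemma dper_iff_per_dvd {d : ℕ} {a : Fin L → Fin A} (hL : 0 < L) :
    dper d a ↔ per a ∣ d := by
  obtain ⟨hpos, hdper⟩ := per_mem (a := a) hL
  constructor
  · intro h
    have hg : dper (Nat.gcd (per a) d) a := dper_gcd hdper h
    have hgpos : 0 < Nat.gcd (per a) d := Nat.gcd_pos_of_pos_left _ hpos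
    have h1 : per a ≤ Nat.gcd (per a) d := Nat.sInf_le ⟨hgpos, hg⟩
    have h2 : Nat.gcd (per a) d ≤ per a := Nat.le_of_dvd hpos (Nat.gcd_dvd_left _ _)
    have : Nat.gcd (per a) d = per a := le_antisymm h2 h1
    rw [← this]; exact Nat.gcd_dvd_right _ _
  · rintro ⟨m, rfl⟩
    rw [Nat.mul_comm]; exact dper_nsmul hdper m

lemma per_dvd {a : Fin L → Fin A} (hL : 0 < L) : per a ∣ L :=
  (dper_iff_per_dvd hL).1 (dper_self a)

lemma iterate_fixed_of_dvd {p k : ℕ} {a : Fin L → Fin A} (hp : dper p a) (hk : p ∣ k) :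
    shift^[k] a = a := by
  obtain ⟨m, rfl⟩ := hk
  rw [Function.iterate_mul]
  exact Function.iterate_fixed (shift_iterate_eq_self_iff.2 hp) m

lemma iter_cancel (hL : 0 < L) {i j : ℕ} {a : Fin L → Fin A} (hij : i ≤ j)
    (h : shift^[i] a = shift^[j] a) : shift^[j - i] a = a := by
  have hNf : shift^[i * L] a = a :=
    iterate_fixed_of_dvd (dper_self a) (Dvd.intro_left i rfl)
  have e1 : i * (L - 1) + i = i * L := by
    cases L with
    | zero => omega
    | succ m => simp only [Nat.succ_sub_one]; ring
  have e2 : i * (L - 1) + j = (j - i) + i * L := by omega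
  calc shift^[j - i] a = shift^[j - i] (shift^[i * L] a) := by rw [hNf]
    _ = shift^[(j - i) + i * L] a := by rw [← Function.iterate_add_apply]
    _ = shift^[i * (L - 1) + j] a := by rw [e2]
    _ = shift^[i * (L - 1)] (shift^[j] a) := by rw [Function.iterate_add_apply]
    _ = shift^[i * (L - 1)] (shift^[i] a) := by rw [h]
    _ = shift^[i * (L - 1) + i] a := by rw [← Function.iterate_add_apply]
    _ = shift^[i * L] a := by rw [e1]
    _ = a := hNf

lemma orbit_eq_image (hL : 0 < L) (a : Fin L → Fin A) :
    orbit a = (fun k => shift^[k] a) '' Set.Iio (per a) := by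
  obtain ⟨hpos, hdper⟩ := per_mem (a := a) hL
  ext b
  constructor
  · rintro ⟨k, rfl⟩
    refine ⟨k % per a, Nat.mod_lt _ hpos, ?_⟩
    have : shift^[per a * (k / per a)] a = a :=
      iterate_fixed_of_dvd hdper (Dvd.intro _ rfl)
    calc shift^[k % per a] a = shift^[k % per a] (shift^[per a * (k / per a)] a) := by rw [this]
      _ = shift^[k % per a + per a * (k / per a)] a := by rw [← Function.iterate_add_apply]
      _ = shift^[k] a := by rw [Nat.mod_add_div]
  · rintro ⟨k, _, rfl⟩
    exact ⟨k, rfl⟩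

lemma orbit_injOn (hL : 0 < L) (a : Fin L → Fin A) :
    Set.InjOn (fun k => shift^[k] a) (Set.Iio (per a)) := by
  have key : ∀ i j, i ∈ Set.Iio (per a) → j ∈ Set.Iio (per a) → i ≤ j →
      shift^[i] a = shift^[j] a → i = j := by
    intro i j hi hj hij h
    have h2 : shift^[j - i] a = a := iter_cancel hL hij h
    have h3 : per a ∣ j - i := (dper_iff_per_dvd hL).1 (shift_iterate_eq_self_iff.1 h2)
    have : j - i < per a := lt_of_le_of_lt (Nat.sub_le _ _) hj
    have := Nat.eq_zero_of_dvd_of_lt h3 this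
    omega
  intro i hi j hj h
  rcases le_total i j with hij | hij
  · exact key i j hi hj hij h
  · exact (key j i hj hi hij h.symm).symm

lemma orbitSize_eq_per (hL : 0 < L) (a : Fin L → Fin A) : orbitSize a = per a := by
  rw [orbitSize, orbit_eq_image hL, Set.ncard_image_of_injOn (orbit_injOn hL a)]
  have : (Set.Iio (per a)) = ↑(Finset.Iio (per a)) := by simp
  rw [this, Set.ncard_coe_finset, Nat.card_Iio]

variable {n : ℕ}

/-- Periodic extension of a string of length `n` to length `L`. -/
def extend (hn : 0 < n) (b : Fin n → Fin A) : Fin L → Fin A :=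
  fun i => b ⟨(i : ℕ) % n, Nat.mod_lt _ hn⟩

/-- Restriction of a string of length `L` to its first `n` entries. -/
def restrict (hle : n ≤ L) (a : Fin L → Fin A) : Fin n → Fin A :=
  fun j => a ⟨(j : ℕ), lt_of_lt_of_le j.2 hle⟩

lemma restrict_extend (hn : 0 < n) (hle : n ≤ L) (b : Fin n → Fin A) :
    restrict hle (extend hn b : Fin L → Fin A) = b := by
  funext j
  show b ⟨(j : ℕ) % n, _⟩ = b j
  congr 1
  ext
  exact Nat.mod_eq_of_lt j.2

lemma dper_extend_iff {d : ℕ} (hn : 0 < n) (hL : 0 < L) (hdvd : n ∣ L) (b : Fin n → Fin A) :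
    dper d (extend hn b : Fin L → Fin A) ↔ dper d b := by
  have hle : n ≤ L := Nat.le_of_dvd hL hdvd
  constructor
  · intro h j
    have hjL : (j : ℕ) < L := lt_of_lt_of_le j.2 hle
    have h2 := h ⟨(j : ℕ), hjL⟩
    show b ⟨((j : ℕ) + d) % n, _⟩ = b j
    simp only [extend] at h2
    have e1 : (⟨(((j : ℕ) + d) % L) % n, Nat.mod_lt _ hn⟩ : Fin n)
        = ⟨((j : ℕ) + d) % n, Nat.mod_lt _ hn⟩ := by
      ext; exact Nat.mod_mod_of_dvd _ hdvd
    have e2 : (⟨(j : ℕ) % n, Nat.mod_lt _ hn⟩ : Fin n) = j := by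
      ext; exact Nat.mod_eq_of_lt j.2
    rw [e1, e2] at h2
    exact h2
  · intro h i
    have h2 := h ⟨(i : ℕ) % n, Nat.mod_lt _ hn⟩
    show b ⟨(((i : ℕ) + d) % L) % n, _⟩ = b ⟨(i : ℕ) % n, _⟩
    have e1 : (⟨(((i : ℕ) + d) % L) % n, Nat.mod_lt _ hn⟩ : Fin n)
        = ⟨((i : ℕ) % n + d) % n, Nat.mod_lt _ hn⟩ := by
      ext
      show (((i : ℕ) + d) % L) % n = ((i : ℕ) % n + d) % n
      rw [Nat.mod_mod_of_dvd _ hdvd, Nat.mod_add_mod]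
    rw [e1]
    exact h2

lemma per_extend (hn : 0 < n) (hL : 0 < L) (hdvd : n ∣ L) (b : Fin n → Fin A) :
    per (extend hn b : Fin L → Fin A) = per b := by
  unfold per
  congr 1
  ext d
  simp only [Set.mem_setOf_eq, dper_extend_iff hn hL hdvd]

lemma eq_extend_of_dper (hn : 0 < n) (hle : n ≤ L) {a : Fin L → Fin A} (h : dper n a) :
    a = extend hn (restrict hle a) := by
  funext i
  show a i = a ⟨((i : ℕ) % n : ℕ), _⟩
  have hL : 0 < L := hn.trans_le hle
  have h2 := dper_nsmul h ((i : ℕ) / n) ⟨(i : ℕ) % n, lt_of_lt_of_le (Nat.mod_lt _ hn) hle⟩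
  have e1 : (⟨((i : ℕ) % n + (i : ℕ) / n * n) % L, Nat.mod_lt _ hL⟩ : Fin L) = i := by
    ext
    show ((i : ℕ) % n + (i : ℕ) / n * n) % L = (i : ℕ)
    rw [Nat.mul_comm, Nat.mod_add_div]
    exact Nat.mod_eq_of_lt i.2
  rw [e1] at h2
  exact h2

lemma dper_extend_self (hn : 0 < n) (hL : 0 < L) (hdvd : n ∣ L) (b : Fin n → Fin A) :
    dper n (extend hn b : Fin L → Fin A) :=
  (dper_extend_iff hn hL hdvd b).2 (dper_self b)

lemma strSum_extend (hn : 0 < n) (hdvd : n ∣ L) (b : Fin n → Fin A) :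
    strSum (extend hn b : Fin L → Fin A) = (L / n) * strSum b := by
  obtain ⟨m, rfl⟩ := hdvd
  rw [Nat.mul_div_cancel_left _ hn]
  set f : ℕ → ℕ := fun k => ((b ⟨k % n, Nat.mod_lt _ hn⟩ : Fin A) : ℕ) with hf
  have hbase : strSum b = ∑ i ∈ Finset.range n, f i := by
    rw [← Fin.sum_univ_eq_sum_range f n]
    apply Finset.sum_congr rfl
    intro i _
    show ((b i : Fin A) : ℕ) = f (i : ℕ)
    simp only [hf]
    have e : (⟨(i : ℕ) % n, Nat.mod_lt _ hn⟩ : Fin n) = i := by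
      ext; exact Nat.mod_eq_of_lt i.2
    rw [e]
  have hmain : ∀ m : ℕ, ∑ i ∈ Finset.range (n * m), f i = m * ∑ i ∈ Finset.range n, f i := by
    intro m
    induction m with
    | zero => simp
    | succ k ih =>
      have hsplit : n * (k + 1) = n * k + n := by ring
      have hsum : ∑ i ∈ Finset.range (n * k + n), f i
          = ∑ i ∈ Finset.range (n * k), f i + ∑ i ∈ Finset.Ico (n * k) (n * k + n), f i := by
        simp only [Finset.range_eq_Ico]
        exact (Finset.sum_Ico_consecutive _ (Nat.zero_le _) (Nat.le_add_right _ _)).symm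
      rw [hsplit, hsum, ih, Finset.sum_Ico_eq_sum_range]
      have h2 : ∀ i, f (n * k + i) = f i := by
        intro i
        simp only [hf]
        congr 2
        ext
        show (n * k + i) % n = i % n
        rw [Nat.add_comm (n*k) i]
        exact Nat.add_mul_mod_self_left i n k
      simp only [Nat.add_sub_cancel_left, h2]
      ring
  have hL2 : strSum (extend hn b : Fin (n*m) → Fin A) = ∑ i ∈ Finset.range (n * m), f i := by
    rw [strSum, ← Fin.sum_univ_eq_sum_range f (n*m)]
    rfl
  rw [hL2, hmain m, hbase]

lemma extend_injective (hn : 0 < n) (hle : n ≤ L) :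
    Function.Injective (extend hn : (Fin n → Fin A) → (Fin L → Fin A)) := by
  intro b c h
  have := congrArg (restrict hle) h
  rwa [restrict_extend hn hle b, restrict_extend hn hle c] at this

lemma orbitSize_extend (hn : 0 < n) (hL : 0 < L) (hdvd : n ∣ L) (b : Fin n → Fin A) :
    orbitSize (extend hn b : Fin L → Fin A) = orbitSize b := by
  rw [orbitSize_eq_per hL, orbitSize_eq_per hn, per_extend hn hL hdvd]

lemma dper_of_orbitSize {a : Fin L → Fin A} (hL : 0 < L) {e : ℕ} (h : orbitSize a = e) :
    dper e a := by
  rw [orbitSize_eq_per hL] at h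
  rw [← h]
  exact (per_mem hL).2

/-- The set of strings of length `L` with orbit size `n` (plus possibly a sum condition
compatible with extension) is the image under `extend` of the corresponding set of
strings of length `n`. -/
lemma set_orbitSize_eq_image (hn : 0 < n) (hL : 0 < L) (hdvd : n ∣ L) :
    {a : Fin L → Fin A | orbitSize a = n} =
      (extend hn : (Fin n → Fin A) → (Fin L → Fin A)) '' {b | orbitSize b = n} := by
  have hle : n ≤ L := Nat.le_of_dvd hL hdvd
  ext a
  constructor
  · intro ha
    refine ⟨restrict hle a, ?_, (eq_extend_of_dper hn hle (dper_of_orbitSize hL ha)).symm⟩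
    have hext : a = extend hn (restrict hle a) := eq_extend_of_dper hn hle (dper_of_orbitSize hL ha)
    have := orbitSize_extend hn hL hdvd (restrict hle a)
    rw [← hext] at this
    show orbitSize (restrict hle a) = n
    rw [← this]
    exact ha
  · rintro ⟨b, hb, rfl⟩
    rw [Set.mem_setOf_eq, orbitSize_extend hn hL hdvd]
    exact hb

lemma ncard_orbitSize_eq (hn : 0 < n) (hL : 0 < L) (hdvd : n ∣ L) :
    {a : Fin L → Fin A | orbitSize a = n}.ncard =
      {b : Fin n → Fin A | orbitSize b = n}.ncard := by
  rw [set_orbitSize_eq_image hn hL hdvd,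
    Set.ncard_image_of_injective _ (extend_injective hn (Nat.le_of_dvd hL hdvd))]

lemma set_orbitSize_sum_eq_image (hn : 0 < n) (hL : 0 < L) (hdvd : n ∣ L) {M : ℕ}
    (hMn : L ∣ M * n) :
    {a : Fin L → Fin A | strSum a = M ∧ orbitSize a = n} =
      (extend hn : (Fin n → Fin A) → (Fin L → Fin A)) ''
        {b | strSum b = M * n / L ∧ orbitSize b = n} := by
  have hle : n ≤ L := Nat.le_of_dvd hL hdvd
  obtain ⟨m, hm⟩ := hdvd
  have hm0 : 0 < m := by
    rcases Nat.eq_zero_or_pos m with h | h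
    · subst h; omega
    · exact h
  have hdvd : n ∣ L := ⟨m, hm⟩
  have hLn : L / n = m := by rw [hm, Nat.mul_div_cancel_left _ hn]
  have hmM : m ∣ M := by
    have : n * m ∣ n * M := by rw [← hm, Nat.mul_comm n M]; exact hMn
    exact (Nat.mul_dvd_mul_iff_left hn).1 this
  have hM' : M * n / L = M / m := by
    rw [hm, Nat.mul_comm M n, Nat.mul_div_mul_left _ _ hn]
  ext a
  constructor
  · rintro ⟨hsum, ho⟩
    have hext : a = extend hn (restrict hle a) := eq_extend_of_dper hn hle (dper_of_orbitSize hL ho)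
    refine ⟨restrict hle a, ⟨?_, ?_⟩, hext.symm⟩
    · have h1 : strSum (extend hn (restrict hle a) : Fin L → Fin A)
          = (L / n) * strSum (restrict hle a) := strSum_extend hn hdvd _
      rw [← hext, hsum, hLn] at h1
      rw [hM', h1, Nat.mul_div_cancel_left _ hm0]
    · have := orbitSize_extend hn hL hdvd (restrict hle a)
      rw [← hext] at this
      show orbitSize (restrict hle a) = n
      rw [← this]; exact ho
  · rintro ⟨b, ⟨hsum, ho⟩, rfl⟩
    refine ⟨?_, ?_⟩
    · show strSum (extend hn b : Fin L → Fin A) = M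
      rw [strSum_extend hn hdvd, hsum, hLn, hM', Nat.mul_div_cancel' hmM]
    · show orbitSize (extend hn b : Fin L → Fin A) = n
      rw [orbitSize_extend hn hL hdvd]; exact ho

lemma ncard_dper_eq {d : ℕ} (hd : 0 < d) (hn : 0 < n) (hdvd : d ∣ n) :
    {b : Fin n → Fin A | dper d b}.ncard = A ^ d := by
  have hle : d ≤ n := Nat.le_of_dvd hn hdvd
  have hset : {b : Fin n → Fin A | dper d b}
      = Set.range (extend hd : (Fin d → Fin A) → (Fin n → Fin A)) := by
    ext b
    constructor
    · intro hb
      exact ⟨restrict hle b, (eq_extend_of_dper hd hle hb).symm⟩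
    · rintro ⟨c, rfl⟩
      exact dper_extend_self hd hn hdvd c
  rw [hset, ← Set.image_univ, Set.ncard_image_of_injective _ (extend_injective hd hle),
    Set.ncard_univ]
  simp [Nat.card_eq_fintype_card]

end Aux


section Count
variable {A n : ℕ}

lemma sum_divisors_count (hn : 0 < n) {d : ℕ} (hd : 0 < d) (hdvd : d ∣ n) :
    ∑ e ∈ d.divisors, {b : Fin n → Fin A | orbitSize b = e}.ncard = A ^ d := by
  classical
  rw [← ncard_dper_eq hd hn hdvd]
  have key : ({b : Fin n → Fin A | dper d b}).toFinset
      = d.divisors.biUnion (fun e => ({b : Fin n → Fin A | orbitSize b = e}).toFinset) := by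
    ext b
    simp only [Set.mem_toFinset, Set.mem_setOf_eq, Finset.mem_biUnion, Nat.mem_divisors]
    constructor
    · intro hb
      refine ⟨orbitSize b, ⟨?_, hd.ne'⟩, rfl⟩
      rw [orbitSize_eq_per hn]
      exact (dper_iff_per_dvd hn).1 hb
    · rintro ⟨e, ⟨he, -⟩, rfl⟩
      rw [orbitSize_eq_per hn] at he
      exact (dper_iff_per_dvd hn).2 he
  rw [Set.ncard_eq_toFinset_card', key, Finset.card_biUnion]
  · apply Finset.sum_congr rfl
    intro e _
    rw [Set.ncard_eq_toFinset_card']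
  · intro x _ y _ hxy
    rw [Function.onFun, Finset.disjoint_left]
    intro b hbx hby
    simp only [Set.mem_toFinset, Set.mem_setOf_eq] at hbx hby
    exact hxy (hbx ▸ hby ▸ rfl)

lemma moebius_count (hn : 0 < n) :
    ({b : Fin n → Fin A | orbitSize b = n}.ncard : ℤ)
      = ∑ k ∈ n.divisors, (ArithmeticFunction.moebius (n / k)) * (A : ℤ) ^ k := by
  have key := (ArithmeticFunction.sum_eq_iff_sum_mul_moebius_eq_on (R := ℤ)
      (f := fun e => ({b : Fin n → Fin A | orbitSize b = e}.ncard : ℤ))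
      (g := fun d => (A : ℤ) ^ d) {d | d ∣ n}
      (fun x y hxy hy => hxy.trans hy)).mp
  have h1 : ∀ d > 0, d ∈ {d | d ∣ n} →
      (∑ i ∈ d.divisors, (({b : Fin n → Fin A | orbitSize b = i}.ncard : ℤ))) = (A : ℤ) ^ d := by
    intro d hd hdn
    rw [← Nat.cast_sum, sum_divisors_count hn hd hdn]
    push_cast
    ring
  have h2 := key h1 n hn (dvd_refl n)
  simp only [Int.cast_id] at h2
  rw [← h2,
    Nat.sum_divisorsAntidiagonal' (f := fun x y => ((ArithmeticFunction.moebius x : ℤ)) * (A : ℤ) ^ y)]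

end Count

/-- `M(A,N,M,n)` does not depend on `N`: if `n ∣ N` and `N ∣ M·n` then
`M(A,N,M,n) = M(A,n,M·n/N,n)`; and, summing over all admissible sums `M`, the total number
of strings of length `N` with orbit size exactly `n` equals the number of strings of
length `n` with orbit size exactly `n`, namely `∑_{k ∣ n} μ(n/k)·A^k`. -/
theorem stmt_18 (A N : ℕ) (hA : 1 ≤ A) (hN : 1 ≤ N) :
    (∀ M n : ℕ, n ∣ N → N ∣ M * n → Mcount A N M n = Mcount A n (M * n / N) n) ∧
    (∀ n : ℕ, n ∣ N →
      Set.ncard {a : Fin N → Fin A | orbitSize a = n} =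
        Set.ncard {b : Fin n → Fin A | orbitSize b = n} ∧
      (Set.ncard {a : Fin N → Fin A | orbitSize a = n} : ℤ) =
        ∑ k ∈ n.divisors, ArithmeticFunction.moebius (n / k) * (A : ℤ) ^ k) := by
  have hN0 : 0 < N := hN
  constructor
  · intro M n hdvd hMn
    have hn : 0 < n := Nat.pos_of_dvd_of_pos hdvd hN0
    unfold Mcount
    rw [set_orbitSize_sum_eq_image hn hN0 hdvd hMn,
      Set.ncard_image_of_injective _ (extend_injective hn (Nat.le_of_dvd hN0 hdvd))]
  · intro n hdvd
    have hn : 0 < n := Nat.pos_of_dvd_of_pos hdvd hN0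
    refine ⟨ncard_orbitSize_eq hn hN0 hdvd, ?_⟩
    rw [ncard_orbitSize_eq hn hN0 hdvd]
    exact moebius_count hn
end
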